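/- arXiv:2408.06542 — 8 statements merged into one kernel-verified Lean document; each statement's English description precedes it below -/
import Mathlib

section
/- Let V'^π be the value function of (π, R, P), let V^{π'}_{M} be the value function of (π', R, P), and let V' be the value function of (π', R', P') with induced state-action value Q'(s,a) = R'(s,a) + γ ∑_{s'} P'(s'|s,a) V'(s') and advantage A'(s,a) = Q'(s,a) − V'(s). Let d^π be the normalized discounted occupancy of π in P and d^{π'} the normalized discounted occupancy of π' in P. Then J_{P,R}(π) − J_{P,R}(π') = (1/(1−γ)) ∑_{(s,a)} d^π(s,a)·A'(s,a) + (1/(1−γ)) ∑_{(s,a)} d^{π'}(s,a)·[ΔR(s,a) + γ(∑_{s'} P'(s'|s,a) V'(s') − ∑_{s'} P(s'|s,a) V'(s'))] + (1/(1−γ)) ∑_{(s,a)} d^π(s,a)·[−ΔR(s,a) + γ(∑_{s'} P(s'|s,a) V'(s') − ∑_{s'} P'(s'|s,a) V'(s'))]. -/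
/-- A belief over a finite set: nonnegative and sums to one. -/
def IsBelief {X : Type*} [Fintype X] (p : X → ℝ) : Prop :=
  (∀ x, 0 ≤ p x) ∧ ∑ x, p x = 1

theorem occ_sum_eq_aux {S A : Type*} [Fintype S] [Fintype A]
    (γ : ℝ) (μ : S → ℝ) (P : S → A → S → ℝ)
    (ρ : S → A → ℝ) (hρ : ∀ s, ∑ a, ρ s a = 1)
    (d : S → A → ℝ)
    (hd : ∀ s a, d s a = (1 - γ) * μ s * ρ s a
        + γ * ρ s a * ∑ p : S × A, P p.1 p.2 s * d p.1 p.2)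
    (W : S → ℝ) :
    ∑ p : S × A, d p.1 p.2 * W p.1
      = (1 - γ) * ∑ s, μ s * W s
        + γ * ∑ p : S × A, d p.1 p.2 * ∑ s', P p.1 p.2 s' * W s' := by
  have hsum : ∀ s, ∑ a, d s a
      = (1 - γ) * μ s + γ * ∑ p : S × A, P p.1 p.2 s * d p.1 p.2 := by
    intro s
    calc ∑ a, d s a
        = ∑ a, ((1 - γ) * μ s + γ * ∑ p : S × A, P p.1 p.2 s * d p.1 p.2) * ρ s a := by
          refine Finset.sum_congr rfl fun a _ => ?_
          rw [hd]; ring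
      _ = ((1 - γ) * μ s + γ * ∑ p : S × A, P p.1 p.2 s * d p.1 p.2) * ∑ a, ρ s a := by
          exact (Finset.mul_sum _ _ _).symm
      _ = _ := by rw [hρ s, mul_one]
  calc ∑ p : S × A, d p.1 p.2 * W p.1
      = ∑ s, (∑ a, d s a) * W s := by
        rw [Fintype.sum_prod_type]
        refine Finset.sum_congr rfl fun s _ => ?_
        show ∑ a, d s a * W s = (∑ a, d s a) * W s
        exact (Finset.sum_mul _ _ _).symm
    _ = ∑ s, ((1 - γ) * μ s + γ * ∑ p : S × A, P p.1 p.2 s * d p.1 p.2) * W s := by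
        exact Finset.sum_congr rfl fun s _ => by rw [hsum]
    _ = (1 - γ) * ∑ s, μ s * W s
        + γ * ∑ s, (∑ p : S × A, P p.1 p.2 s * d p.1 p.2) * W s := by
        rw [Finset.mul_sum, Finset.mul_sum, ← Finset.sum_add_distrib]
        exact Finset.sum_congr rfl fun s _ => by ring
    _ = _ := by
        congr 1
        congr 1
        calc ∑ s, (∑ p : S × A, P p.1 p.2 s * d p.1 p.2) * W s
            = ∑ s, ∑ p : S × A, P p.1 p.2 s * d p.1 p.2 * W s := by
              exact Finset.sum_congr rfl fun s _ => Finset.sum_mul _ _ _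
          _ = ∑ p : S × A, ∑ s, P p.1 p.2 s * d p.1 p.2 * W s := Finset.sum_comm
          _ = ∑ p : S × A, d p.1 p.2 * ∑ s, P p.1 p.2 s * W s := by
              refine Finset.sum_congr rfl fun p _ => ?_
              rw [Finset.mul_sum]
              exact Finset.sum_congr rfl fun s _ => by ring

theorem pol_sum_eq_aux {S A : Type*} [Fintype S] [Fintype A]
    (γ : ℝ) (μ : S → ℝ) (P : S → A → S → ℝ)
    (ρ : S → A → ℝ) (hρ : ∀ s, ∑ a, ρ s a = 1)
    (d : S → A → ℝ)
    (hd : ∀ s a, d s a = (1 - γ) * μ s * ρ s a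
        + γ * ρ s a * ∑ p : S × A, P p.1 p.2 s * d p.1 p.2)
    (Q : S → A → ℝ) (V : S → ℝ)
    (hV : ∀ s, V s = ∑ a, ρ s a * Q s a) :
    ∑ p : S × A, d p.1 p.2 * Q p.1 p.2 = ∑ p : S × A, d p.1 p.2 * V p.1 := by
  have hfac : ∀ s a, d s a
      = ρ s a * ((1 - γ) * μ s + γ * ∑ p : S × A, P p.1 p.2 s * d p.1 p.2) := by
    intro s a; rw [hd]; ring
  rw [Fintype.sum_prod_type, Fintype.sum_prod_type]
  refine Finset.sum_congr rfl fun s _ => ?_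
  set c := (1 - γ) * μ s + γ * ∑ p : S × A, P p.1 p.2 s * d p.1 p.2 with hc
  calc ∑ a, d s a * Q s a
      = ∑ a, c * (ρ s a * Q s a) := by
        exact Finset.sum_congr rfl fun a _ => by rw [hfac]; ring
    _ = c * ∑ a, ρ s a * Q s a := (Finset.mul_sum _ _ _).symm
    _ = c * V s := by rw [hV]
    _ = ∑ a, d s a * V s := by
        rw [← Finset.sum_mul]
        have : ∑ a, d s a = c := by
          calc ∑ a, d s a = ∑ a, ρ s a * c := Finset.sum_congr rfl fun a _ => hfac s a
            _ = (∑ a, ρ s a) * c := (Finset.sum_mul _ _ _).symm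
            _ = c := by rw [hρ s, one_mul]
        rw [this, mul_comm]

/-- Performance difference lemma in mismatched MDPs (Lemma 1). -/
theorem performance_difference_mismatched_mdps
    {S A : Type*} [Fintype S] [Fintype A]
    (γ : ℝ) (hγ0 : 0 < γ) (hγ1 : γ < 1)
    (μ : S → ℝ) (hμ : IsBelief μ)
    (P P' : S → A → S → ℝ)
    (hP : ∀ s a, IsBelief (P s a)) (hP' : ∀ s a, IsBelief (P' s a))
    (R R' : S → A → ℝ)
    (π π' : S → A → ℝ)
    (hπ : ∀ s, IsBelief (π s)) (hπ' : ∀ s, IsBelief (π' s))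
    -- value functions: Vπ of (π, R, P); VM' of (π', R, P); V' of (π', R', P')
    (Vπ VM' V' : S → ℝ)
    (hVπ : ∀ s, Vπ s = ∑ a, π s a * (R s a + γ * ∑ s', P s a s' * Vπ s'))
    (hVM' : ∀ s, VM' s = ∑ a, π' s a * (R s a + γ * ∑ s', P s a s' * VM' s'))
    (hV' : ∀ s, V' s = ∑ a, π' s a * (R' s a + γ * ∑ s', P' s a s' * V' s'))
    -- normalized discounted occupancies of π and π' in P
    (dπ dπ' : S → A → ℝ)
    (hdπ : ∀ s a, dπ s a = (1 - γ) * μ s * π s a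
        + γ * π s a * ∑ p : S × A, P p.1 p.2 s * dπ p.1 p.2)
    (hdπ' : ∀ s a, dπ' s a = (1 - γ) * μ s * π' s a
        + γ * π' s a * ∑ p : S × A, P p.1 p.2 s * dπ' p.1 p.2) :
    (∑ s, μ s * Vπ s) - (∑ s, μ s * VM' s)
      = (1 / (1 - γ)) * (∑ p : S × A, dπ p.1 p.2 *
          ((R' p.1 p.2 + γ * ∑ s', P' p.1 p.2 s' * V' s') - V' p.1))
      + (1 / (1 - γ)) * (∑ p : S × A, dπ' p.1 p.2 *
          ((R' p.1 p.2 - R p.1 p.2)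
            + γ * ((∑ s', P' p.1 p.2 s' * V' s') - (∑ s', P p.1 p.2 s' * V' s'))))
      + (1 / (1 - γ)) * (∑ p : S × A, dπ p.1 p.2 *
          (-(R' p.1 p.2 - R p.1 p.2)
            + γ * ((∑ s', P p.1 p.2 s' * V' s') - (∑ s', P' p.1 p.2 s' * V' s')))) := by
  have hne : (1 : ℝ) - γ ≠ 0 := by linarith
  have hρ : ∀ s, ∑ a, π s a = 1 := fun s => (hπ s).2
  have hρ' : ∀ s, ∑ a, π' s a = 1 := fun s => (hπ' s).2
  -- value-function identities
  have hA1 : ∑ p : S × A, dπ p.1 p.2 * (R p.1 p.2 + γ * ∑ s', P p.1 p.2 s' * Vπ s')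
      = ∑ p : S × A, dπ p.1 p.2 * Vπ p.1 :=
    pol_sum_eq_aux γ μ P π hρ dπ hdπ _ Vπ hVπ
  have hA2 : ∑ p : S × A, dπ' p.1 p.2 * (R p.1 p.2 + γ * ∑ s', P p.1 p.2 s' * VM' s')
      = ∑ p : S × A, dπ' p.1 p.2 * VM' p.1 :=
    pol_sum_eq_aux γ μ P π' hρ' dπ' hdπ' _ VM' hVM'
  have hA3 : ∑ p : S × A, dπ' p.1 p.2 * (R' p.1 p.2 + γ * ∑ s', P' p.1 p.2 s' * V' s')
      = ∑ p : S × A, dπ' p.1 p.2 * V' p.1 :=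
    pol_sum_eq_aux γ μ P π' hρ' dπ' hdπ' _ V' hV'
  -- occupancy identities
  have hB1 := occ_sum_eq_aux γ μ P π hρ dπ hdπ Vπ
  have hB2 := occ_sum_eq_aux γ μ P π' hρ' dπ' hdπ' VM'
  have hB3 := occ_sum_eq_aux γ μ P π hρ dπ hdπ V'
  have hB4 := occ_sum_eq_aux γ μ P π' hρ' dπ' hdπ' V'
  -- splitting lemmas
  have hs1 : ∑ p : S × A, dπ p.1 p.2 * (R p.1 p.2 + γ * ∑ s', P p.1 p.2 s' * Vπ s')
      = (∑ p : S × A, dπ p.1 p.2 * R p.1 p.2)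
        + γ * ∑ p : S × A, dπ p.1 p.2 * ∑ s', P p.1 p.2 s' * Vπ s' := by
    rw [Finset.mul_sum, ← Finset.sum_add_distrib]
    exact Finset.sum_congr rfl fun p _ => by ring
  have hs2 : ∑ p : S × A, dπ' p.1 p.2 * (R p.1 p.2 + γ * ∑ s', P p.1 p.2 s' * VM' s')
      = (∑ p : S × A, dπ' p.1 p.2 * R p.1 p.2)
        + γ * ∑ p : S × A, dπ' p.1 p.2 * ∑ s', P p.1 p.2 s' * VM' s' := by
    rw [Finset.mul_sum, ← Finset.sum_add_distrib]
    exact Finset.sum_congr rfl fun p _ => by ring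
  have hs3 : ∑ p : S × A, dπ' p.1 p.2 * (R' p.1 p.2 + γ * ∑ s', P' p.1 p.2 s' * V' s')
      = (∑ p : S × A, dπ' p.1 p.2 * R' p.1 p.2)
        + γ * ∑ p : S × A, dπ' p.1 p.2 * ∑ s', P' p.1 p.2 s' * V' s' := by
    rw [Finset.mul_sum, ← Finset.sum_add_distrib]
    exact Finset.sum_congr rfl fun p _ => by ring
  -- decompositions of the goal's three sums
  have e1 : ∑ p : S × A, dπ p.1 p.2 *
        ((R' p.1 p.2 + γ * ∑ s', P' p.1 p.2 s' * V' s') - V' p.1)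
      = (∑ p : S × A, dπ p.1 p.2 * R' p.1 p.2)
        + γ * (∑ p : S × A, dπ p.1 p.2 * ∑ s', P' p.1 p.2 s' * V' s')
        - (∑ p : S × A, dπ p.1 p.2 * V' p.1) := by
    rw [Finset.mul_sum, ← Finset.sum_add_distrib, ← Finset.sum_sub_distrib]
    exact Finset.sum_congr rfl fun p _ => by ring
  have e2 : ∑ p : S × A, dπ' p.1 p.2 *
        ((R' p.1 p.2 - R p.1 p.2)
          + γ * ((∑ s', P' p.1 p.2 s' * V' s') - (∑ s', P p.1 p.2 s' * V' s')))
      = (∑ p : S × A, dπ' p.1 p.2 * R' p.1 p.2)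
        - (∑ p : S × A, dπ' p.1 p.2 * R p.1 p.2)
        + γ * ((∑ p : S × A, dπ' p.1 p.2 * ∑ s', P' p.1 p.2 s' * V' s')
          - (∑ p : S × A, dπ' p.1 p.2 * ∑ s', P p.1 p.2 s' * V' s')) := by
    rw [← Finset.sum_sub_distrib, ← Finset.sum_sub_distrib, Finset.mul_sum,
      ← Finset.sum_add_distrib]
    exact Finset.sum_congr rfl fun p _ => by ring
  have e3 : ∑ p : S × A, dπ p.1 p.2 *
        (-(R' p.1 p.2 - R p.1 p.2)
          + γ * ((∑ s', P p.1 p.2 s' * V' s') - (∑ s', P' p.1 p.2 s' * V' s')))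
      = -((∑ p : S × A, dπ p.1 p.2 * R' p.1 p.2)
          - (∑ p : S × A, dπ p.1 p.2 * R p.1 p.2))
        + γ * ((∑ p : S × A, dπ p.1 p.2 * ∑ s', P p.1 p.2 s' * V' s')
          - (∑ p : S × A, dπ p.1 p.2 * ∑ s', P' p.1 p.2 s' * V' s')) := by
    rw [← Finset.sum_sub_distrib, ← Finset.sum_sub_distrib, Finset.mul_sum,
      ← Finset.sum_neg_distrib, ← Finset.sum_add_distrib]
    exact Finset.sum_congr rfl fun p _ => by ring
  rw [e1, e2, e3]
  field_simp
  linear_combination -hA1 + hs1 - hB1 + hA2 - hs2 + hB2 - hA3 + hs3 + hB3 - hB4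
end

section
/- Assume all occupancies are nonnegative, that d^{π'}(s,a) ≤ C·d^π(s,a) for all (s,a), and that whenever d^π(s,a) > 0 one has P'(s'|s,a) = 0 ⟹ P(s'|s,a) = 0. Let ε_{π'} = ∑_{(s,a)} d^π(s,a)·|A'(s,a)| where A' is the advantage of π' in (R', P'), let ε_{R'} = ∑_{(s,a)} d^π(s,a)·|ΔR(s,a)|, let ε_{P'} = ∑_{(s,a) : d^π(s,a)>0} d^π(s,a)·KL(P(·|s,a) ‖ P'(·|s,a)), and let R'_max = max_{(s,a)} |R'(s,a)|. Then J_{P,R}(π) − J_{P,R}(π') ≤ ε_{π'}/(1−γ) + (C+1)·ε_{R'}/(1−γ) + ((C+1)·γ·R'_max/(1−γ)²)·√(2·ε_{P'}). -/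
/-- KL divergence between two distributions on a finite set. -/
noncomputable def KL {X : Type*} [Fintype X] (p q : X → ℝ) : ℝ :=
  ∑ x, if 0 < p x then p x * Real.log (p x / q x) else 0

private lemma key_add {I : Type*} [Fintype I] (w u v : I → ℝ) (c : ℝ) :
    ∑ i, w i * (u i + c * v i) = (∑ i, w i * u i) + c * ∑ i, w i * v i := by
  rw [Finset.mul_sum, ← Finset.sum_add_distrib]
  exact Finset.sum_congr rfl fun i _ => by ring

private lemma key_sub {I : Type*} [Fintype I] (w u v : I → ℝ) (c : ℝ) :
    ∑ i, w i * (u i - c * v i) = (∑ i, w i * u i) - c * ∑ i, w i * v i := by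
  rw [Finset.mul_sum, ← Finset.sum_sub_distrib]
  exact Finset.sum_congr rfl fun i _ => by ring




private lemma hasDerivAtF (x : ℝ) (hx : 0 < x) :
    HasDerivAt (fun y : ℝ => 2*(y+2)*(y*Real.log y - y + 1) - 3*(y-1)^2)
      (4*((x+1)*Real.log x - 2*(x-1))) x := by
  have hlog : HasDerivAt Real.log x⁻¹ x := Real.hasDerivAt_log hx.ne'
  have h1 : HasDerivAt (fun y : ℝ => y * Real.log y) (Real.log x + 1) x := by
    have := (hasDerivAt_id x).mul hlog
    convert this using 1
    · rfl
    · rfl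
    · rfl
    · simp [hx.ne']
  have h2 : HasDerivAt (fun y : ℝ => y*Real.log y - y + 1) (Real.log x) x := by
    simpa using (h1.sub (hasDerivAt_id x)).add_const 1
  have h3 : HasDerivAt (fun y : ℝ => 2*(y+2)) 2 x := by
    simpa using ((hasDerivAt_id x).add_const 2).const_mul 2
  have h4 := h3.mul h2
  have h5 : HasDerivAt (fun y : ℝ => 3*(y-1)^2) (3*(2*(x-1))) x := by
    simpa using (((hasDerivAt_id x).sub_const 1).pow 2).const_mul 3
  have := h4.sub h5
  convert this using 1
  · rfl
  · rfl
  · rfl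
  · ring

private lemma log_ineq_aux {t : ℝ} (ht : 0 < t) :
    3 * (t - 1)^2 ≤ 2 * (t + 2) * (t * Real.log t - t + 1) := by
  set F : ℝ → ℝ := fun y => 2*(y+2)*(y*Real.log y - y + 1) - 3*(y-1)^2 with hF
  suffices h : 0 ≤ F t by simp only [hF] at h; linarith
  -- G monotone
  have hGd : ∀ x : ℝ, 0 < x → HasDerivAt (fun y : ℝ => (y+1)*Real.log y - 2*(y-1))
      (Real.log x + (x+1)*x⁻¹ - 2) x := by
    intro x hx
    have hlog : HasDerivAt Real.log x⁻¹ x := Real.hasDerivAt_log hx.ne'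
    have := (((hasDerivAt_id x).add_const 1).mul hlog).sub
      (((hasDerivAt_id x).sub_const 1).const_mul 2)
    convert this using 1
    · rfl
    · rfl
    · rfl
    · simp
  have hGmono : MonotoneOn (fun y : ℝ => (y+1)*Real.log y - 2*(y-1)) (Set.Ioi 0) := by
    apply monotoneOn_of_deriv_nonneg (convex_Ioi 0)
    · exact fun x hx => ((hGd x hx).continuousAt).continuousWithinAt
    · intro x hx
      rw [interior_Ioi] at hx
      exact ((hGd x hx).differentiableAt).differentiableWithinAt
    · intro x hx
      rw [interior_Ioi] at hx
      rw [(hGd x hx).deriv]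
      have h1 := Real.log_le_sub_one_of_pos (inv_pos.mpr hx)
      rw [Real.log_inv] at h1
      have hx' : (x+1)*x⁻¹ = 1 + x⁻¹ := by
        rw [add_mul, mul_inv_cancel₀ (ne_of_gt hx), one_mul]
      rw [hx']
      linarith
  have hG1 : (fun y : ℝ => (y+1)*Real.log y - 2*(y-1)) 1 = 0 := by simp
  have hFd := hasDerivAtF
  have hF1 : F 1 = 0 := by simp [hF]
  rcases le_or_gt 1 t with h1t | ht1
  · have hmono : MonotoneOn F (Set.Ici 1) := by
      apply monotoneOn_of_deriv_nonneg (convex_Ici 1)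
      · exact fun x hx => ((hFd x (lt_of_lt_of_le one_pos (Set.mem_Ici.mp hx))).continuousAt).continuousWithinAt
      · intro x hx
        rw [interior_Ici] at hx
        exact ((hFd x (lt_trans one_pos hx)).differentiableAt).differentiableWithinAt
      · intro x hx
        rw [interior_Ici] at hx
        rw [(hFd x (lt_trans one_pos hx)).deriv]
        have := hGmono (Set.mem_Ioi.mpr one_pos) (Set.mem_Ioi.mpr (lt_trans one_pos hx)) hx.le
        rw [hG1] at this
        have h2 : 0 ≤ (x+1)*Real.log x - 2*(x-1) := this
        linarith
    have := hmono Set.self_mem_Ici (Set.mem_Ici.mpr h1t) h1t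
    rw [hF1] at this; exact this
  · have hanti : AntitoneOn F (Set.Icc t 1) := by
      apply antitoneOn_of_deriv_nonpos (convex_Icc t 1)
      · exact fun x hx => ((hFd x (lt_of_lt_of_le ht hx.1)).continuousAt).continuousWithinAt
      · intro x hx
        rw [interior_Icc] at hx
        exact ((hFd x (lt_trans ht hx.1)).differentiableAt).differentiableWithinAt
      · intro x hx
        rw [interior_Icc] at hx
        rw [(hFd x (lt_trans ht hx.1)).deriv]
        have := hGmono (Set.mem_Ioi.mpr (lt_trans ht hx.1)) (Set.mem_Ioi.mpr one_pos) hx.2.le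
        rw [hG1] at this
        have h2 : (x+1)*Real.log x - 2*(x-1) ≤ 0 := this
        linarith
    have := hanti (Set.mem_Icc.mpr ⟨le_refl t, ht1.le⟩) (Set.mem_Icc.mpr ⟨ht1.le, le_refl 1⟩) ht1.le
    rw [hF1] at this; exact this
private lemma pointwise_kl {p q : ℝ} (hp : 0 ≤ p) (hq : 0 ≤ q) (hac : q = 0 → p = 0) :
    3/2 * (p - q)^2 / (p + 2*q) ≤ (if 0 < p then p * Real.log (p / q) else 0) - p + q := by
  rcases eq_or_lt_of_le hp with hp0 | hp0
  · rw [if_neg (by rw [← hp0]; exact lt_irrefl 0), ← hp0]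
    rcases eq_or_lt_of_le hq with hq0 | hq0
    · rw [← hq0]; norm_num
    · rw [div_le_iff₀ (by linarith)]
      nlinarith [sq_nonneg q]
  · have hq0 : 0 < q := by
      rcases eq_or_lt_of_le hq with h | h
      · exfalso; exact absurd (hac h.symm) (ne_of_gt hp0)
      · exact h
    rw [if_pos hp0]
    set t := p / q with htdef
    have ht : 0 < t := div_pos hp0 hq0
    have hpt : p = q * t := by rw [htdef]; field_simp
    have key := log_ineq_aux ht
    rw [div_le_iff₀ (by nlinarith)]
    rw [hpt]
    nlinarith [mul_le_mul_of_nonneg_left key (sq_nonneg q), sq_nonneg q, hq0]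

private lemma kl_nonneg' {X : Type*} [Fintype X] {p q : X → ℝ}
    (hp : IsBelief p) (hq : IsBelief q) (hac : ∀ x, q x = 0 → p x = 0) :
    3/2 * ∑ x, (p x - q x)^2 / (p x + 2 * q x) ≤ KL p q := by
  have h : ∀ x : X, 3/2 * (p x - q x)^2 / (p x + 2*q x)
      ≤ (if 0 < p x then p x * Real.log (p x / q x) else 0) - p x + q x :=
    fun x => pointwise_kl (hp.1 x) (hq.1 x) (hac x)
  have := Finset.sum_le_sum (fun x (_ : x ∈ Finset.univ) => h x)
  rw [Finset.mul_sum]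
  calc ∑ x, 3/2 * ((p x - q x)^2 / (p x + 2 * q x))
      = ∑ x, 3/2 * (p x - q x)^2 / (p x + 2 * q x) := by
        apply Finset.sum_congr rfl; intros; rw [mul_div_assoc]
    _ ≤ ∑ x, ((if 0 < p x then p x * Real.log (p x / q x) else 0) - p x + q x) := this
    _ = KL p q := by
        rw [Finset.sum_add_distrib, Finset.sum_sub_distrib, hp.2, hq.2, KL]; ring

private lemma pinsker {X : Type*} [Fintype X] {p q : X → ℝ}
    (hp : IsBelief p) (hq : IsBelief q) (hac : ∀ x, q x = 0 → p x = 0) :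
    0 ≤ KL p q ∧ (∑ x, |p x - q x|) ≤ Real.sqrt (2 * KL p q) := by
  set T := ∑ x, (p x - q x)^2 / (p x + 2 * q x) with hT
  have hTnn : 0 ≤ T := Finset.sum_nonneg fun x _ =>
    div_nonneg (sq_nonneg _) (by have := hp.1 x; have := hq.1 x; linarith)
  have hKT := kl_nonneg' hp hq hac
  have hKnn : 0 ≤ KL p q := le_trans (by linarith) hKT
  refine ⟨hKnn, ?_⟩
  -- Cauchy-Schwarz
  have hCS := Finset.sum_mul_sq_le_sq_mul_sq Finset.univ
    (fun x => Real.sqrt (p x + 2 * q x))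
    (fun x => |p x - q x| / Real.sqrt (p x + 2 * q x))
  have hterm : ∀ x : X, Real.sqrt (p x + 2 * q x) * (|p x - q x| / Real.sqrt (p x + 2 * q x))
      = |p x - q x| := by
    intro x
    rcases eq_or_lt_of_le (by have := hp.1 x; have := hq.1 x; linarith :
        (0:ℝ) ≤ p x + 2 * q x) with h | h
    · have hpx : p x = 0 := by have := hp.1 x; have := hq.1 x; linarith
      have hqx : q x = 0 := by have := hp.1 x; have := hq.1 x; linarith
      simp [hpx, hqx]
    · have hs : Real.sqrt (p x + 2 * q x) ≠ 0 := by positivity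
      rw [mul_comm, div_mul_cancel₀ _ hs]
  rw [Finset.sum_congr rfl (fun x _ => hterm x)] at hCS
  have h3 : (∑ x : X, Real.sqrt (p x + 2 * q x) ^ 2) = 3 := by
    have : ∀ x : X, Real.sqrt (p x + 2 * q x) ^ 2 = p x + 2 * q x := fun x =>
      Real.sq_sqrt (by have := hp.1 x; have := hq.1 x; linarith)
    rw [Finset.sum_congr rfl (fun x _ => this x), Finset.sum_add_distrib, hp.2,
      ← Finset.mul_sum, hq.2]
    norm_num
  have h4 : (∑ x : X, (|p x - q x| / Real.sqrt (p x + 2 * q x)) ^ 2) = T := by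
    apply Finset.sum_congr rfl
    intro x _
    rw [div_pow, sq_abs, Real.sq_sqrt (by have := hp.1 x; have := hq.1 x; linarith :
      (0:ℝ) ≤ p x + 2 * q x)]
  rw [h3, h4] at hCS
  have hsum_nn : 0 ≤ ∑ x : X, |p x - q x| := Finset.sum_nonneg fun x _ => abs_nonneg _
  rw [show (2 : ℝ) * KL p q = (2 * KL p q) from rfl]
  rw [Real.le_sqrt hsum_nn]
  calc (∑ x : X, |p x - q x|) ^ 2 ≤ 3 * T := hCS
    _ ≤ 2 * KL p q := by rw [hT]; linarith
  linarith
private lemma occ_identity {S A : Type*} [Fintype S] [Fintype A]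
    (γ : ℝ) (μ : S → ℝ) (P : S → A → S → ℝ)
    (ρ : S → A → ℝ) (hρ : ∀ s, ∑ a, ρ s a = 1)
    (d : S → A → ℝ)
    (hd : ∀ s a, d s a = (1 - γ) * μ s * ρ s a
        + γ * ρ s a * ∑ p : S × A, P p.1 p.2 s * d p.1 p.2)
    (f : S → ℝ) :
    ∑ p : S × A, d p.1 p.2 * (f p.1 - γ * ∑ s', P p.1 p.2 s' * f s')
      = (1 - γ) * ∑ s, μ s * f s := by
  have h1 : ∑ p : S × A, d p.1 p.2 * f p.1
      = (1 - γ) * (∑ s, μ s * f s) + γ * ∑ p : S × A, d p.1 p.2 * ∑ s', P p.1 p.2 s' * f s' := by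
    rw [Fintype.sum_prod_type]
    have hrow : ∀ s : S, (∑ a : A, d s a * f s)
        = (1 - γ) * (μ s * f s) + γ * ((∑ p : S × A, P p.1 p.2 s * d p.1 p.2) * f s) := by
      intro s
      rw [Finset.sum_congr rfl (fun a _ => by rw [hd s a]; ring :
        ∀ a ∈ Finset.univ, d s a * f s
          = ρ s a * ((1 - γ) * (μ s * f s)
            + γ * ((∑ p : S × A, P p.1 p.2 s * d p.1 p.2) * f s)))]
      rw [← Finset.sum_mul, hρ s, one_mul]
    rw [Finset.sum_congr rfl (fun s _ => hrow s), Finset.sum_add_distrib,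
      ← Finset.mul_sum, ← Finset.mul_sum]
    congr 1
    -- swap sums
    rw [Finset.mul_sum, Finset.mul_sum]
    have hswap : ∀ s : S, γ * ((∑ p : S × A, P p.1 p.2 s * d p.1 p.2) * f s)
        = ∑ p : S × A, γ * (d p.1 p.2 * (P p.1 p.2 s * f s)) := by
      intro s
      rw [Finset.sum_mul, Finset.mul_sum]
      exact Finset.sum_congr rfl fun p _ => by ring
    rw [Finset.sum_congr rfl (fun s _ => hswap s), Finset.sum_comm]
    apply Finset.sum_congr rfl
    intro p _
    rw [Finset.mul_sum, Finset.mul_sum]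
    try exact Finset.sum_congr rfl fun s _ => by ring
  have h2 : ∑ p : S × A, d p.1 p.2 * (f p.1 - γ * ∑ s', P p.1 p.2 s' * f s')
      = (∑ p : S × A, d p.1 p.2 * f p.1)
        - γ * ∑ p : S × A, d p.1 p.2 * ∑ s', P p.1 p.2 s' * f s' := by
    rw [Finset.mul_sum, ← Finset.sum_sub_distrib]
    exact Finset.sum_congr rfl fun p _ => by ring
  rw [h2, h1]; ring

private lemma bellman_consistency {S A : Type*} [Fintype S] [Fintype A]
    (ρ : S → A → ℝ) (hρ : ∀ s, ∑ a, ρ s a = 1)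
    (d : S → A → ℝ) (g : S → ℝ) (hdg : ∀ s a, d s a = ρ s a * g s)
    (V : S → ℝ) (q : S → A → ℝ) (hV : ∀ s, V s = ∑ a, ρ s a * q s a) :
    ∑ p : S × A, d p.1 p.2 * q p.1 p.2 = ∑ p : S × A, d p.1 p.2 * V p.1 := by
  rw [Fintype.sum_prod_type, Fintype.sum_prod_type]
  apply Finset.sum_congr rfl
  intro s _
  have hL : ∑ a : A, d s a * q s a = g s * V s := by
    rw [hV s, Finset.mul_sum]
    exact Finset.sum_congr rfl fun a _ => by rw [hdg]; ring
  have hR : ∑ a : A, d s a * V s = g s * V s := by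
    rw [Finset.sum_congr rfl (fun a _ => by rw [hdg s a] : ∀ a ∈ Finset.univ,
      d s a * V s = ρ s a * g s * V s)]
    rw [Finset.sum_congr rfl (fun a _ => by ring : ∀ a ∈ Finset.univ,
      ρ s a * g s * V s = ρ s a * (g s * V s)), ← Finset.sum_mul, hρ s, one_mul]
  rw [hL, hR]

private lemma occ_mass {S A : Type*} [Fintype S] [Fintype A]
    (γ : ℝ) (hγ1 : γ < 1) (μ : S → ℝ) (hμ : ∑ s, μ s = 1)
    (P : S → A → S → ℝ) (hP : ∀ s a, ∑ s', P s a s' = 1)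
    (ρ : S → A → ℝ) (hρ : ∀ s, ∑ a, ρ s a = 1)
    (d : S → A → ℝ)
    (hd : ∀ s a, d s a = (1 - γ) * μ s * ρ s a
        + γ * ρ s a * ∑ p : S × A, P p.1 p.2 s * d p.1 p.2) :
    ∑ p : S × A, d p.1 p.2 = 1 := by
  have := occ_identity γ μ P ρ hρ d hd (fun _ => 1)
  simp only [mul_one] at this
  rw [hμ, mul_one] at this
  have h : ∀ p : S × A, d p.1 p.2 * (1 - γ * ∑ s', P p.1 p.2 s') = d p.1 p.2 * (1 - γ) := by
    intro p; rw [hP]; ring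
  rw [Finset.sum_congr rfl (fun p _ => h p)] at this
  rw [← Finset.sum_mul] at this
  have hne : (1 : ℝ) - γ ≠ 0 := by linarith
  have h1 : (∑ p : S × A, d p.1 p.2) * (1 - γ) = 1 * (1 - γ) := by rw [one_mul]; exact this
  exact mul_right_cancel₀ hne h1
private lemma value_bound {S A : Type*} [Fintype S] [Fintype A] [Nonempty S] [Nonempty A]
    (γ : ℝ) (hγ0 : 0 < γ) (hγ1 : γ < 1)
    (P' : S → A → S → ℝ) (hP'nn : ∀ s a s', 0 ≤ P' s a s') (hP'1 : ∀ s a, ∑ s', P' s a s' = 1)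
    (R' : S → A → ℝ) (π' : S → A → ℝ) (hπ'nn : ∀ s a, 0 ≤ π' s a) (hπ'1 : ∀ s, ∑ a, π' s a = 1)
    (V' : S → ℝ)
    (hV' : ∀ s, V' s = ∑ a, π' s a * (R' s a + γ * ∑ s', P' s a s' * V' s'))
    (Rmax : ℝ) (hRmax : ∀ s a, |R' s a| ≤ Rmax) :
    ∀ s, |V' s| ≤ Rmax / (1 - γ) := by
  obtain ⟨s0, -, hs0⟩ := Finset.exists_mem_eq_sup' (Finset.univ_nonempty (α := S))
    ((fun s : S => |V' s|) : S → ℝ)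
  set m : ℝ := Finset.univ.sup' Finset.univ_nonempty (fun s : S => |V' s|) with hm
  have hle : ∀ s, |V' s| ≤ m := by
    intro s
    rw [hm]
    exact Finset.le_sup' (fun s : S => |V' s|) (Finset.mem_univ s)
  have hmeq : m = |V' s0| := by rw [hm]; exact hs0
  have hstep : |V' s0| ≤ Rmax + γ * m := by
    rw [hV' s0]
    calc |∑ a, π' s0 a * (R' s0 a + γ * ∑ s', P' s0 a s' * V' s')|
        ≤ ∑ a, |π' s0 a * (R' s0 a + γ * ∑ s', P' s0 a s' * V' s')| :=
          Finset.abs_sum_le_sum_abs _ _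
      _ ≤ ∑ a, π' s0 a * (Rmax + γ * m) := by
          apply Finset.sum_le_sum
          intro a _
          rw [abs_mul, abs_of_nonneg (hπ'nn s0 a)]
          apply mul_le_mul_of_nonneg_left _ (hπ'nn s0 a)
          have h1 := abs_add_le (R' s0 a) (γ * ∑ s', P' s0 a s' * V' s')
          rw [abs_mul, abs_of_nonneg hγ0.le] at h1
          have h2 : |∑ s', P' s0 a s' * V' s'| ≤ m := by
            calc |∑ s', P' s0 a s' * V' s'| ≤ ∑ s', |P' s0 a s' * V' s'| :=
                Finset.abs_sum_le_sum_abs _ _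
              _ ≤ ∑ s', P' s0 a s' * m := by
                  apply Finset.sum_le_sum
                  intro s' _
                  rw [abs_mul, abs_of_nonneg (hP'nn s0 a s')]
                  exact mul_le_mul_of_nonneg_left (hle s') (hP'nn s0 a s')
              _ = m := by rw [← Finset.sum_mul, hP'1, one_mul]
          have h3 := mul_le_mul_of_nonneg_left h2 hγ0.le
          have h4 := hRmax s0 a
          linarith
      _ = Rmax + γ * m := by rw [← Finset.sum_mul, hπ'1, one_mul]
  have hkey : m ≤ Rmax + γ * m := by linarith [hmeq.le, hmeq.ge, hstep]
  have hmb : m ≤ Rmax / (1 - γ) := by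
    rw [le_div_iff₀ (by linarith)]
    nlinarith
  exact fun s => le_trans (hle s) hmb
private lemma pointwise_t {d d' W L Vm C : ℝ} (hd : 0 ≤ d) (hd' : 0 ≤ d')
    (hCd : d' ≤ C * d) (hW : |W| ≤ Vm * L) (hC1 : 0 ≤ C + 1) :
    (d - d') * W ≤ (C + 1) * (Vm * (d * L)) := by
  have h1 := mul_le_mul_of_nonneg_left (le_abs_self W) hd
  have h2 := mul_le_mul_of_nonneg_left (neg_abs_le W) hd'
  have h3 := mul_le_mul_of_nonneg_right hCd (abs_nonneg W)
  have h4 := mul_le_mul_of_nonneg_left hW (mul_nonneg hC1 hd)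
  nlinarith

private lemma final_algebra {γ : ℝ} (h : γ < 1) (a b c d r : ℝ) :
    (1 - γ) * (a / (1 - γ) + b / (1 - γ) + (c * γ * d / (1 - γ) ^ 2) * r)
      = a + b + γ * ((c * (d / (1 - γ))) * r) := by
  have hne : (1 : ℝ) - γ ≠ 0 := by intro hh; rw [sub_eq_zero] at hh; exact absurd hh.symm h.ne
  field_simp

set_option maxHeartbeats 1000000 in
/-- Performance gap bound in mismatched MDPs (Lemma 2). -/
theorem performance_gap_bound_mismatched_mdps
    {S A : Type*} [Fintype S] [Fintype A] [Nonempty S] [Nonempty A]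
    (γ : ℝ) (hγ0 : 0 < γ) (hγ1 : γ < 1)
    (μ : S → ℝ) (hμ : IsBelief μ)
    (P P' : S → A → S → ℝ)
    (hP : ∀ s a, IsBelief (P s a)) (hP' : ∀ s a, IsBelief (P' s a))
    (R R' : S → A → ℝ)
    (π π' : S → A → ℝ)
    (hπ : ∀ s, IsBelief (π s)) (hπ' : ∀ s, IsBelief (π' s))
    -- value functions: Vπ of (π, R, P); VM' of (π', R, P); V' of (π', R', P')
    (Vπ VM' V' : S → ℝ)
    (hVπ : ∀ s, Vπ s = ∑ a, π s a * (R s a + γ * ∑ s', P s a s' * Vπ s'))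
    (hVM' : ∀ s, VM' s = ∑ a, π' s a * (R s a + γ * ∑ s', P s a s' * VM' s'))
    (hV' : ∀ s, V' s = ∑ a, π' s a * (R' s a + γ * ∑ s', P' s a s' * V' s'))
    -- normalized discounted occupancies of π and π' in P
    (dπ dπ' : S → A → ℝ)
    (hdπ : ∀ s a, dπ s a = (1 - γ) * μ s * π s a
        + γ * π s a * ∑ p : S × A, P p.1 p.2 s * dπ p.1 p.2)
    (hdπ' : ∀ s a, dπ' s a = (1 - γ) * μ s * π' s a
        + γ * π' s a * ∑ p : S × A, P p.1 p.2 s * dπ' p.1 p.2)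
    (hdπ_nonneg : ∀ s a, 0 ≤ dπ s a) (hdπ'_nonneg : ∀ s a, 0 ≤ dπ' s a)
    -- bounded density ratio
    (C : ℝ) (hC : ∀ s a, dπ' s a ≤ C * dπ s a)
    -- absolute continuity on the support of dπ
    (hac : ∀ s a, 0 < dπ s a → ∀ s', P' s a s' = 0 → P s a s' = 0)
    -- error terms
    (επ' εR' εP' R'max : ℝ)
    (hεπ' : επ' = ∑ p : S × A, dπ p.1 p.2 *
        |(R' p.1 p.2 + γ * ∑ s', P' p.1 p.2 s' * V' s') - V' p.1|)
    (hεR' : εR' = ∑ p : S × A, dπ p.1 p.2 * |R' p.1 p.2 - R p.1 p.2|)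
    (hεP' : εP' = ∑ p : S × A, if 0 < dπ p.1 p.2 then
        dπ p.1 p.2 * KL (P p.1 p.2) (P' p.1 p.2) else 0)
    (hR'max : R'max = Finset.univ.sup' Finset.univ_nonempty
        (fun p : S × A => |R' p.1 p.2|)) :
    (∑ s, μ s * Vπ s) - (∑ s, μ s * VM' s)
      ≤ επ' / (1 - γ) + (C + 1) * εR' / (1 - γ)
        + ((C + 1) * γ * R'max / (1 - γ) ^ 2) * Real.sqrt (2 * εP') := by
  have hγ1' : (0:ℝ) < 1 - γ := by linarith
  have hμ1 := hμ.2
  have hπ1 : ∀ s, ∑ a, π s a = 1 := fun s => (hπ s).2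
  have hπ'1 : ∀ s, ∑ a, π' s a = 1 := fun s => (hπ' s).2
  have hπ'nn : ∀ s a, 0 ≤ π' s a := fun s a => (hπ' s).1 a
  have hPnn : ∀ s a s', 0 ≤ P s a s' := fun s a => (hP s a).1
  have hP1 : ∀ s a, ∑ s', P s a s' = 1 := fun s a => (hP s a).2
  have hP'nn : ∀ s a s', 0 ≤ P' s a s' := fun s a => (hP' s a).1
  have hP'1 : ∀ s a, ∑ s', P' s a s' = 1 := fun s a => (hP' s a).2
  -- occupancy mass
  have hmass : ∑ p : S × A, dπ p.1 p.2 = 1 := occ_mass γ hγ1 μ hμ1 P hP1 π hπ1 dπ hdπ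
  -- C nonneg
  have hC0 : 0 ≤ C := by
    by_contra h
    push_neg at h
    have hex : ∃ p : S × A, 0 < dπ p.1 p.2 := by
      by_contra hno
      push_neg at hno
      have hz : ∀ p : S × A, dπ p.1 p.2 = 0 :=
        fun p => le_antisymm (hno p) (hdπ_nonneg p.1 p.2)
      rw [Finset.sum_congr rfl (fun p _ => hz p)] at hmass
      simp at hmass
    obtain ⟨p, hp⟩ := hex
    have h1 := hC p.1 p.2
    have h2 := hdπ'_nonneg p.1 p.2
    nlinarith
  -- reward bound
  have hRb : ∀ s a, |R' s a| ≤ R'max := by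
    intro s a
    rw [hR'max]
    exact Finset.le_sup' (fun p : S × A => |R' p.1 p.2|) (Finset.mem_univ (s, a))
  have hR0 : 0 ≤ R'max :=
    le_trans (abs_nonneg _) (hRb (Classical.arbitrary S) (Classical.arbitrary A))
  have hVb : ∀ s, |V' s| ≤ R'max / (1 - γ) :=
    value_bound γ hγ0 hγ1 P' hP'nn hP'1 R' π' hπ'nn hπ'1 V' hV' R'max hRb
  have hVm0 : 0 ≤ R'max / (1 - γ) := div_nonneg hR0 hγ1'.le
  -- occupancy identities in atom form
  have hocc_a : (∑ p : S × A, dπ p.1 p.2 * V' p.1)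
      - γ * (∑ p : S × A, dπ p.1 p.2 * ∑ s', P p.1 p.2 s' * V' s')
      = (1 - γ) * ∑ s, μ s * V' s :=
    (key_sub (fun p : S × A => dπ p.1 p.2) (fun p => V' p.1)
      (fun p => ∑ s', P p.1 p.2 s' * V' s') γ).symm.trans
      (occ_identity γ μ P π hπ1 dπ hdπ V')
  have hocc_b : (∑ p : S × A, dπ' p.1 p.2 * V' p.1)
      - γ * (∑ p : S × A, dπ' p.1 p.2 * ∑ s', P p.1 p.2 s' * V' s')
      = (1 - γ) * ∑ s, μ s * V' s :=
    (key_sub (fun p : S × A => dπ' p.1 p.2) (fun p => V' p.1)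
      (fun p => ∑ s', P p.1 p.2 s' * V' s') γ).symm.trans
      (occ_identity γ μ P π' hπ'1 dπ' hdπ' V')
  have hocc_c : (∑ p : S × A, dπ p.1 p.2 * Vπ p.1)
      - γ * (∑ p : S × A, dπ p.1 p.2 * ∑ s', P p.1 p.2 s' * Vπ s')
      = (1 - γ) * ∑ s, μ s * Vπ s :=
    (key_sub (fun p : S × A => dπ p.1 p.2) (fun p => Vπ p.1)
      (fun p => ∑ s', P p.1 p.2 s' * Vπ s') γ).symm.trans
      (occ_identity γ μ P π hπ1 dπ hdπ Vπ)
  have hocc_e : (∑ p : S × A, dπ' p.1 p.2 * VM' p.1)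
      - γ * (∑ p : S × A, dπ' p.1 p.2 * ∑ s', P p.1 p.2 s' * VM' s')
      = (1 - γ) * ∑ s, μ s * VM' s :=
    (key_sub (fun p : S × A => dπ' p.1 p.2) (fun p => VM' p.1)
      (fun p => ∑ s', P p.1 p.2 s' * VM' s') γ).symm.trans
      (occ_identity γ μ P π' hπ'1 dπ' hdπ' VM')
  -- Bellman consistency in atom form
  have hbc_c : (∑ p : S × A, dπ p.1 p.2 * (R p.1 p.2 + γ * ∑ s', P p.1 p.2 s' * Vπ s'))
      = ∑ p : S × A, dπ p.1 p.2 * Vπ p.1 :=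
    bellman_consistency π hπ1 dπ
      (fun s => (1 - γ) * μ s + γ * ∑ p : S × A, P p.1 p.2 s * dπ p.1 p.2)
      (fun s a => by rw [hdπ s a]; ring) Vπ
      (fun s a => R s a + γ * ∑ s', P s a s' * Vπ s') hVπ
  have hbc_c' : (∑ p : S × A, dπ p.1 p.2 * R p.1 p.2)
      + γ * (∑ p : S × A, dπ p.1 p.2 * ∑ s', P p.1 p.2 s' * Vπ s')
      = ∑ p : S × A, dπ p.1 p.2 * Vπ p.1 :=
    (key_add (fun p : S × A => dπ p.1 p.2) (fun p => R p.1 p.2)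
      (fun p => ∑ s', P p.1 p.2 s' * Vπ s') γ).symm.trans hbc_c
  have hbc_e : (∑ p : S × A, dπ' p.1 p.2 * (R p.1 p.2 + γ * ∑ s', P p.1 p.2 s' * VM' s'))
      = ∑ p : S × A, dπ' p.1 p.2 * VM' p.1 :=
    bellman_consistency π' hπ'1 dπ'
      (fun s => (1 - γ) * μ s + γ * ∑ p : S × A, P p.1 p.2 s * dπ' p.1 p.2)
      (fun s a => by rw [hdπ' s a]; ring) VM'
      (fun s a => R s a + γ * ∑ s', P s a s' * VM' s') hVM'
  have hbc_e' : (∑ p : S × A, dπ' p.1 p.2 * R p.1 p.2)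
      + γ * (∑ p : S × A, dπ' p.1 p.2 * ∑ s', P p.1 p.2 s' * VM' s')
      = ∑ p : S × A, dπ' p.1 p.2 * VM' p.1 :=
    (key_add (fun p : S × A => dπ' p.1 p.2) (fun p => R p.1 p.2)
      (fun p => ∑ s', P p.1 p.2 s' * VM' s') γ).symm.trans hbc_e
  have hbc_b : (∑ p : S × A, dπ' p.1 p.2 * (R' p.1 p.2 + γ * ∑ s', P' p.1 p.2 s' * V' s'))
      = ∑ p : S × A, dπ' p.1 p.2 * V' p.1 :=
    bellman_consistency π' hπ'1 dπ'
      (fun s => (1 - γ) * μ s + γ * ∑ p : S × A, P p.1 p.2 s * dπ' p.1 p.2)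
      (fun s a => by rw [hdπ' s a]; ring) V'
      (fun s a => R' s a + γ * ∑ s', P' s a s' * V' s') hV'
  have hbc_b' : (∑ p : S × A, dπ' p.1 p.2 * R' p.1 p.2)
      + γ * (∑ p : S × A, dπ' p.1 p.2 * ∑ s', P' p.1 p.2 s' * V' s')
      = ∑ p : S × A, dπ' p.1 p.2 * V' p.1 :=
    (key_add (fun p : S × A => dπ' p.1 p.2) (fun p => R' p.1 p.2)
      (fun p => ∑ s', P' p.1 p.2 s' * V' s') γ).symm.trans hbc_b
  -- the three error sums in atom form
  have eq_adv : (∑ p : S × A, dπ p.1 p.2 *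
        ((R' p.1 p.2 + γ * ∑ s', P' p.1 p.2 s' * V' s') - V' p.1))
      = ((∑ p : S × A, dπ p.1 p.2 * R' p.1 p.2)
        + γ * (∑ p : S × A, dπ p.1 p.2 * ∑ s', P' p.1 p.2 s' * V' s'))
        - ∑ p : S × A, dπ p.1 p.2 * V' p.1 := by
    rw [Finset.mul_sum, ← Finset.sum_add_distrib, ← Finset.sum_sub_distrib]
    exact Finset.sum_congr rfl fun p _ => by ring
  have eq_r : (∑ p : S × A, (dπ' p.1 p.2 - dπ p.1 p.2) * (R' p.1 p.2 - R p.1 p.2))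
      = ((∑ p : S × A, dπ' p.1 p.2 * R' p.1 p.2) - ∑ p : S × A, dπ' p.1 p.2 * R p.1 p.2)
        - ((∑ p : S × A, dπ p.1 p.2 * R' p.1 p.2) - ∑ p : S × A, dπ p.1 p.2 * R p.1 p.2) := by
    rw [← Finset.sum_sub_distrib, ← Finset.sum_sub_distrib, ← Finset.sum_sub_distrib]
    exact Finset.sum_congr rfl fun p _ => by ring
  have eq_t : (∑ p : S × A, (dπ p.1 p.2 - dπ' p.1 p.2) *
        ((∑ s', P p.1 p.2 s' * V' s') - ∑ s', P' p.1 p.2 s' * V' s'))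
      = ((∑ p : S × A, dπ p.1 p.2 * ∑ s', P p.1 p.2 s' * V' s')
          - ∑ p : S × A, dπ p.1 p.2 * ∑ s', P' p.1 p.2 s' * V' s')
        - ((∑ p : S × A, dπ' p.1 p.2 * ∑ s', P p.1 p.2 s' * V' s')
          - ∑ p : S × A, dπ' p.1 p.2 * ∑ s', P' p.1 p.2 s' * V' s') := by
    rw [← Finset.sum_sub_distrib, ← Finset.sum_sub_distrib, ← Finset.sum_sub_distrib]
    exact Finset.sum_congr rfl fun p _ => by ring
  -- master identity
  have master : (1 - γ) * ((∑ s, μ s * Vπ s) - ∑ s, μ s * VM' s)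
      = (∑ p : S × A, dπ p.1 p.2 *
          ((R' p.1 p.2 + γ * ∑ s', P' p.1 p.2 s' * V' s') - V' p.1))
        + (∑ p : S × A, (dπ' p.1 p.2 - dπ p.1 p.2) * (R' p.1 p.2 - R p.1 p.2))
        + γ * ∑ p : S × A, (dπ p.1 p.2 - dπ' p.1 p.2) *
            ((∑ s', P p.1 p.2 s' * V' s') - ∑ s', P' p.1 p.2 s' * V' s') := by
    rw [eq_adv, eq_r, eq_t]
    linear_combination hocc_a - hocc_b - hocc_c + hocc_e - hbc_c' + hbc_e' - hbc_b'
  -- bound on the advantage term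
  have ineq_adv : (∑ p : S × A, dπ p.1 p.2 *
        ((R' p.1 p.2 + γ * ∑ s', P' p.1 p.2 s' * V' s') - V' p.1)) ≤ επ' := by
    rw [hεπ']
    apply Finset.sum_le_sum
    intro p _
    exact mul_le_mul_of_nonneg_left (le_abs_self _) (hdπ_nonneg p.1 p.2)
  -- bound on the reward term
  have ineq_r : (∑ p : S × A, (dπ' p.1 p.2 - dπ p.1 p.2) * (R' p.1 p.2 - R p.1 p.2))
      ≤ (C + 1) * εR' := by
    rw [hεR', Finset.mul_sum]
    apply Finset.sum_le_sum
    intro p _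
    have h1 := mul_le_mul_of_nonneg_left (le_abs_self (R' p.1 p.2 - R p.1 p.2))
      (hdπ'_nonneg p.1 p.2)
    have h2 := mul_le_mul_of_nonneg_left (neg_abs_le (R' p.1 p.2 - R p.1 p.2))
      (hdπ_nonneg p.1 p.2)
    have h3 := mul_le_mul_of_nonneg_right (hC p.1 p.2) (abs_nonneg (R' p.1 p.2 - R p.1 p.2))
    nlinarith
  -- Pinsker + Cauchy-Schwarz bound on total variation sum
  have hLsum : (∑ p : S × A, dπ p.1 p.2 * ∑ s', |P p.1 p.2 s' - P' p.1 p.2 s'|)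
      ≤ Real.sqrt (2 * εP') := by
    have hstep1 : (∑ p : S × A, dπ p.1 p.2 * ∑ s', |P p.1 p.2 s' - P' p.1 p.2 s'|)
        ≤ ∑ p : S × A, (if 0 < dπ p.1 p.2 then
            dπ p.1 p.2 * Real.sqrt (2 * KL (P p.1 p.2) (P' p.1 p.2)) else 0) := by
      apply Finset.sum_le_sum
      intro p _
      by_cases hp : 0 < dπ p.1 p.2
      · rw [if_pos hp]
        exact mul_le_mul_of_nonneg_left
          (pinsker (hP p.1 p.2) (hP' p.1 p.2) (fun s' => hac p.1 p.2 hp s')).2 hp.le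
      · rw [if_neg hp]
        have hz : dπ p.1 p.2 = 0 := le_antisymm (not_lt.mp hp) (hdπ_nonneg p.1 p.2)
        rw [hz, zero_mul]
    have hCS := Finset.sum_mul_sq_le_sq_mul_sq Finset.univ
      (fun p : S × A => Real.sqrt (dπ p.1 p.2))
      (fun p : S × A => Real.sqrt (dπ p.1 p.2) * (if 0 < dπ p.1 p.2 then
        Real.sqrt (2 * KL (P p.1 p.2) (P' p.1 p.2)) else 0))
    have hterm : ∀ p : S × A, Real.sqrt (dπ p.1 p.2) * (Real.sqrt (dπ p.1 p.2) *
        (if 0 < dπ p.1 p.2 then Real.sqrt (2 * KL (P p.1 p.2) (P' p.1 p.2)) else 0))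
        = (if 0 < dπ p.1 p.2 then
            dπ p.1 p.2 * Real.sqrt (2 * KL (P p.1 p.2) (P' p.1 p.2)) else 0) := by
      intro p
      rw [← mul_assoc, Real.mul_self_sqrt (hdπ_nonneg p.1 p.2)]
      split_ifs with h
      · rfl
      · rw [mul_zero]
    have hsq1 : ∀ p : S × A, Real.sqrt (dπ p.1 p.2) ^ 2 = dπ p.1 p.2 :=
      fun p => Real.sq_sqrt (hdπ_nonneg p.1 p.2)
    have hsq2 : ∀ p : S × A, (Real.sqrt (dπ p.1 p.2) * (if 0 < dπ p.1 p.2 then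
        Real.sqrt (2 * KL (P p.1 p.2) (P' p.1 p.2)) else 0)) ^ 2
        = 2 * (if 0 < dπ p.1 p.2 then
            dπ p.1 p.2 * KL (P p.1 p.2) (P' p.1 p.2) else 0) := by
      intro p
      rw [mul_pow, Real.sq_sqrt (hdπ_nonneg p.1 p.2)]
      split_ifs with h
      · have hKnn : 0 ≤ KL (P p.1 p.2) (P' p.1 p.2) :=
          (pinsker (hP p.1 p.2) (hP' p.1 p.2) (fun s' => hac p.1 p.2 h s')).1
        rw [Real.sq_sqrt (by linarith)]
        ring
      · ring
    rw [Finset.sum_congr rfl (fun p _ => hterm p),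
      Finset.sum_congr rfl (fun p _ => hsq1 p),
      Finset.sum_congr rfl (fun p _ => hsq2 p), hmass, one_mul,
      ← Finset.mul_sum] at hCS
    have hZnn : 0 ≤ ∑ p : S × A, (if 0 < dπ p.1 p.2 then
        dπ p.1 p.2 * Real.sqrt (2 * KL (P p.1 p.2) (P' p.1 p.2)) else 0) := by
      apply Finset.sum_nonneg
      intro p _
      split_ifs with h
      · positivity
      · exact le_refl 0
    have hεnn : 0 ≤ 2 * εP' := by
      rw [hεP']
      rw [Finset.mul_sum]
      apply Finset.sum_nonneg
      intro p _
      split_ifs with h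
      · have hKnn : 0 ≤ KL (P p.1 p.2) (P' p.1 p.2) :=
          (pinsker (hP p.1 p.2) (hP' p.1 p.2) (fun s' => hac p.1 p.2 h s')).1
        positivity
      · simp
    refine le_trans hstep1 ?_
    rw [Real.le_sqrt hZnn]
    · rw [hεP']
      exact hCS
    · exact hεnn
  -- bound on the transition term
  have hWb : ∀ p : S × A, |(∑ s', P p.1 p.2 s' * V' s') - ∑ s', P' p.1 p.2 s' * V' s'|
      ≤ (R'max / (1 - γ)) * ∑ s', |P p.1 p.2 s' - P' p.1 p.2 s'| := by
    intro p
    have h0 : (∑ s', P p.1 p.2 s' * V' s') - ∑ s', P' p.1 p.2 s' * V' s'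
        = ∑ s', (P p.1 p.2 s' - P' p.1 p.2 s') * V' s' := by
      rw [← Finset.sum_sub_distrib]
      exact Finset.sum_congr rfl fun s' _ => by ring
    rw [h0]
    calc |∑ s', (P p.1 p.2 s' - P' p.1 p.2 s') * V' s'|
        ≤ ∑ s', |(P p.1 p.2 s' - P' p.1 p.2 s') * V' s'| := Finset.abs_sum_le_sum_abs _ _
      _ ≤ ∑ s', |P p.1 p.2 s' - P' p.1 p.2 s'| * (R'max / (1 - γ)) := by
          apply Finset.sum_le_sum
          intro s' _
          rw [abs_mul]
          exact mul_le_mul_of_nonneg_left (hVb s') (abs_nonneg _)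
      _ = (R'max / (1 - γ)) * ∑ s', |P p.1 p.2 s' - P' p.1 p.2 s'| := by
          rw [← Finset.sum_mul, mul_comm]
  have ineq_t : (∑ p : S × A, (dπ p.1 p.2 - dπ' p.1 p.2) *
        ((∑ s', P p.1 p.2 s' * V' s') - ∑ s', P' p.1 p.2 s' * V' s'))
      ≤ ((C + 1) * (R'max / (1 - γ))) * Real.sqrt (2 * εP') := by
    have step1 : (∑ p : S × A, (dπ p.1 p.2 - dπ' p.1 p.2) *
          ((∑ s', P p.1 p.2 s' * V' s') - ∑ s', P' p.1 p.2 s' * V' s'))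
        ≤ ∑ p : S × A, (C + 1) * ((R'max / (1 - γ)) *
            (dπ p.1 p.2 * ∑ s', |P p.1 p.2 s' - P' p.1 p.2 s'|)) := by
      apply Finset.sum_le_sum
      intro p _
      exact pointwise_t (hdπ_nonneg p.1 p.2) (hdπ'_nonneg p.1 p.2) (hC p.1 p.2)
        (hWb p) (by linarith)
    refine le_trans step1 ?_
    rw [← Finset.mul_sum, ← Finset.mul_sum]
    calc (C + 1) * ((R'max / (1 - γ)) *
          ∑ p : S × A, dπ p.1 p.2 * ∑ s', |P p.1 p.2 s' - P' p.1 p.2 s'|)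
        ≤ (C + 1) * ((R'max / (1 - γ)) * Real.sqrt (2 * εP')) := by
          apply mul_le_mul_of_nonneg_left
            (mul_le_mul_of_nonneg_left hLsum hVm0) (by linarith : (0:ℝ) ≤ C + 1)
      _ = ((C + 1) * (R'max / (1 - γ))) * Real.sqrt (2 * εP') := by ring
  -- combine
  have hfinal : (1 - γ) * ((∑ s, μ s * Vπ s) - ∑ s, μ s * VM' s)
      ≤ επ' + (C + 1) * εR' + γ * (((C + 1) * (R'max / (1 - γ))) * Real.sqrt (2 * εP')) := by
    rw [master]
    have h3 := mul_le_mul_of_nonneg_left ineq_t hγ0.le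
    linarith
  have hEeq : ∀ r : ℝ, (1 - γ) * (επ' / (1 - γ) + (C + 1) * εR' / (1 - γ)
      + ((C + 1) * γ * R'max / (1 - γ) ^ 2) * r)
      = επ' + (C + 1) * εR' + γ * (((C + 1) * (R'max / (1 - γ))) * r) :=
    fun r => final_algebra hγ1 επ' ((C + 1) * εR') (C + 1) R'max r
  exact le_of_mul_le_mul_left (by rw [hEeq (Real.sqrt (2 * εP'))]; exact hfinal) hγ1'
end

section
/- Let p and q be beliefs over a finite set X such that q(x) = 0 implies p(x) = 0, and let f : X → ℝ satisfy |f(x)| ≤ M for all x ∈ X. Then |∑_{x∈X} f(x)·(p(x) − q(x))| ≤ M·√(2·KL(p‖q)). -/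
open Real Finset Set

noncomputable def Gfun : ℝ → ℝ := fun t => (t+1) * Real.log t - 2*(t-1)
noncomputable def Ffun : ℝ → ℝ := fun t => 2*t*(t+2) * Real.log t - (t-1)*(5*t+1)

lemma log_add_inv_nonneg {t : ℝ} (ht : 0 < t) : 0 ≤ Real.log t + 1/t - 1 := by
  have h := Real.log_le_sub_one_of_pos (x := 1/t) (by positivity)
  rw [one_div, Real.log_inv] at h
  have : Real.log t ≥ 1 - 1/t := by rw [one_div]; linarith
  linarith

lemma G_hasDeriv {t : ℝ} (ht : 0 < t) :
    HasDerivAt Gfun (Real.log t + 1/t - 1) t := by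
  have h1 : HasDerivAt (fun t : ℝ => (t+1) * Real.log t)
      (1 * Real.log t + (t+1) * t⁻¹) t :=
    ((hasDerivAt_id t).add_const 1).mul (Real.hasDerivAt_log ht.ne')
  have h2 : HasDerivAt (fun t : ℝ => 2*(t-1)) (2*1) t :=
    ((hasDerivAt_id t).sub_const 1).const_mul 2
  have h := h1.sub h2
  refine HasDerivAt.congr_deriv h ?_
  field_simp
  ring

lemma G_mono : MonotoneOn Gfun (Set.Ioi 0) := by
  have hint : interior (Set.Ioi (0:ℝ)) = Set.Ioi 0 := interior_Ioi
  apply monotoneOn_of_deriv_nonneg (convex_Ioi 0)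
  · exact fun x hx => ((G_hasDeriv hx).continuousAt.continuousWithinAt)
  · intro x hx
    rw [hint] at hx
    exact (G_hasDeriv hx).differentiableAt.differentiableWithinAt
  · intro x hx
    rw [hint] at hx
    rw [(G_hasDeriv hx).deriv]
    exact log_add_inv_nonneg hx

lemma G_one : Gfun 1 = 0 := by simp [Gfun]

lemma F_hasDeriv {t : ℝ} (ht : 0 < t) : HasDerivAt Ffun (4 * Gfun t) t := by
  have h1 : HasDerivAt (fun t : ℝ => 2*t*(t+2) * Real.log t)
      ((2*1*(t+2) + 2*t*1) * Real.log t + 2*t*(t+2) * t⁻¹) t := by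
    have ha : HasDerivAt (fun t : ℝ => 2*t*(t+2)) (2*1*(t+2) + 2*t*1) t :=
      (((hasDerivAt_id t).const_mul 2)).mul ((hasDerivAt_id t).add_const 2)
    exact ha.mul (Real.hasDerivAt_log ht.ne')
  have h2 : HasDerivAt (fun t : ℝ => (t-1)*(5*t+1)) (1*(5*t+1) + (t-1)*(5*1)) t :=
    ((hasDerivAt_id t).sub_const 1).mul (((hasDerivAt_id t).const_mul 5).add_const 1)
  have h := h1.sub h2
  refine HasDerivAt.congr_deriv h ?_
  unfold Gfun
  field_simp
  ring

lemma F_nonneg {t : ℝ} (ht : 0 < t) : 0 ≤ Ffun t := by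
  have hF1 : Ffun 1 = 0 := by simp [Ffun]
  rcases le_or_gt 1 t with h1 | h1
  · -- monotone on Ici 1
    have hmono : MonotoneOn Ffun (Set.Ici 1) := by
      apply monotoneOn_of_deriv_nonneg (convex_Ici 1)
      · exact fun x hx => ((F_hasDeriv (lt_of_lt_of_le one_pos hx)).continuousAt.continuousWithinAt)
      · intro x hx
        rw [interior_Ici] at hx
        exact (F_hasDeriv (lt_trans one_pos hx)).differentiableAt.differentiableWithinAt
      · intro x hx
        rw [interior_Ici] at hx
        rw [(F_hasDeriv (lt_trans one_pos hx)).deriv]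
        have : (0:ℝ) ≤ Gfun x := by
          have := G_mono (Set.mem_Ioi.2 one_pos) (Set.mem_Ioi.2 (lt_trans one_pos hx)) hx.le
          rw [G_one] at this; exact this
        linarith
    have := hmono (Set.mem_Ici.2 le_rfl) (Set.mem_Ici.2 h1) h1
    rw [hF1] at this; exact this
  · -- antitone on Ioc 0 1
    have hanti : AntitoneOn Ffun (Set.Ioc 0 1) := by
      apply antitoneOn_of_deriv_nonpos (convex_Ioc 0 1)
      · exact fun x hx => ((F_hasDeriv hx.1).continuousAt.continuousWithinAt)
      · intro x hx
        rw [interior_Ioc] at hx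
        exact (F_hasDeriv hx.1).differentiableAt.differentiableWithinAt
      · intro x hx
        rw [interior_Ioc] at hx
        rw [(F_hasDeriv hx.1).deriv]
        have : Gfun x ≤ 0 := by
          have := G_mono (Set.mem_Ioi.2 hx.1) (Set.mem_Ioi.2 one_pos) hx.2.le
          rw [G_one] at this; exact this
        linarith
    have := hanti (Set.mem_Ioc.2 ⟨ht, h1.le⟩) (Set.mem_Ioc.2 ⟨one_pos, le_rfl⟩) h1.le
    rw [hF1] at this; exact this

lemma key_pointwise {a b : ℝ} (ha : 0 ≤ a) (hb : 0 ≤ b) (hab : b = 0 → a = 0) :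
    3*(a-b)^2 ≤ 2*(a+2*b) * ((if 0 < a then a * Real.log (a/b) else 0) - a + b) := by
  rcases eq_or_lt_of_le ha with h0 | h0
  · rw [if_neg (by rw [← h0]; exact lt_irrefl 0)]
    rw [← h0]; nlinarith
  · have hbpos : 0 < b := by
      rcases eq_or_lt_of_le hb with hb0 | hb0
      · exact absurd (hab hb0.symm) (ne_of_gt h0)
      · exact hb0
    rw [if_pos h0]
    have hF := F_nonneg (t := a/b) (by positivity)
    have hid : b^2 * Ffun (a/b) = 2*a*(a+2*b)*Real.log (a/b) - (a-b)*(5*a+b) := by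
      unfold Ffun
      field_simp
    have h2 : 0 ≤ 2*a*(a+2*b)*Real.log (a/b) - (a-b)*(5*a+b) := by
      rw [← hid]; positivity
    nlinarith [h2]

/-- Model advantage bound: Jensen + Hölder + Pinsker. -/
theorem bounded_expectation_difference_le_sqrt_kl
    {X : Type*} [Fintype X] (p q : X → ℝ)
    (hp : IsBelief p) (hq : IsBelief q)
    (hac : ∀ x, q x = 0 → p x = 0)
    (f : X → ℝ) (M : ℝ) (hf : ∀ x, |f x| ≤ M) :
    |∑ x, f x * (p x - q x)| ≤ M * Real.sqrt (2 * KL p q) := by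
  obtain ⟨hp0, hp1⟩ := hp
  obtain ⟨hq0, hq1⟩ := hq
  set kl : X → ℝ := fun x => if 0 < p x then p x * Real.log (p x / q x) else 0 with hkl
  set w : X → ℝ := fun x => (p x + 2 * q x) / 3 with hw
  set r : X → ℝ := fun x => kl x - p x + q x with hr
  have hwnn : ∀ x, 0 ≤ w x := fun x => by
    have := hp0 x; have := hq0 x; simp only [hw]; positivity
  have hkey : ∀ x, (p x - q x)^2 ≤ w x * (2 * r x) := by
    intro x
    have h := key_pointwise (hp0 x) (hq0 x) (hac x)
    simp only [hw, hr, hkl]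
    nlinarith [h]
  have hrnn : ∀ x, 0 ≤ r x := by
    intro x
    rcases eq_or_lt_of_le (hwnn x) with h0 | h0
    · have hp0' : p x = 0 := by
        have := hp0 x; have := hq0 x
        simp only [hw] at h0; nlinarith [h0.symm]
      have hq0' : q x = 0 := by
        have := hp0 x; have := hq0 x
        simp only [hw] at h0; nlinarith [h0.symm]
      simp [hr, hkl, hp0', hq0']
    · have := hkey x
      nlinarith [sq_nonneg (p x - q x)]
  have hwsum : ∑ x, w x = 1 := by
    simp only [hw]
    rw [← Finset.sum_div, Finset.sum_add_distrib, ← Finset.mul_sum, hp1, hq1]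
    norm_num
  have hrsum : ∑ x, r x = KL p q := by
    simp only [hr]
    rw [Finset.sum_add_distrib, Finset.sum_sub_distrib, hp1, hq1]
    simp [KL, hkl]
  -- pointwise |p - q| ≤ sqrt (w) * sqrt (2 r)
  have habs : ∀ x, |p x - q x| ≤ Real.sqrt (w x) * Real.sqrt (2 * r x) := by
    intro x
    rw [← Real.sqrt_mul (hwnn x)]
    rw [← Real.sqrt_sq_eq_abs]
    exact Real.sqrt_le_sqrt (hkey x)
  have hCS : (∑ x, Real.sqrt (w x) * Real.sqrt (2 * r x))^2
      ≤ (∑ x, Real.sqrt (w x)^2) * (∑ x, Real.sqrt (2 * r x)^2) :=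
    Finset.sum_mul_sq_le_sq_mul_sq Finset.univ _ _
  have hsq1 : ∑ x, Real.sqrt (w x)^2 = 1 := by
    rw [← hwsum]; apply Finset.sum_congr rfl
    intro x _; rw [Real.sq_sqrt (hwnn x)]
  have hsq2 : ∑ x, Real.sqrt (2 * r x)^2 = 2 * KL p q := by
    rw [← hrsum, Finset.mul_sum]
    apply Finset.sum_congr rfl
    intro x _; rw [Real.sq_sqrt (by have := hrnn x; linarith)]
  have hTnn : 0 ≤ ∑ x, Real.sqrt (w x) * Real.sqrt (2 * r x) :=
    Finset.sum_nonneg fun x _ => mul_nonneg (Real.sqrt_nonneg _) (Real.sqrt_nonneg _)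
  have hT : ∑ x, Real.sqrt (w x) * Real.sqrt (2 * r x) ≤ Real.sqrt (2 * KL p q) := by
    rw [← Real.sqrt_sq hTnn]
    apply Real.sqrt_le_sqrt
    calc (∑ x, Real.sqrt (w x) * Real.sqrt (2 * r x))^2
        ≤ (∑ x, Real.sqrt (w x)^2) * (∑ x, Real.sqrt (2 * r x)^2) := hCS
      _ = 2 * KL p q := by rw [hsq1, hsq2, one_mul]
  have hS : ∑ x, |p x - q x| ≤ Real.sqrt (2 * KL p q) :=
    le_trans (Finset.sum_le_sum fun x _ => habs x) hT
  have hXne : (Finset.univ : Finset X).Nonempty := by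
    rcases (Finset.univ (α := X)).eq_empty_or_nonempty with h | h
    · rw [h] at hp1; simp at hp1
    · exact h
  obtain ⟨x0, _⟩ := hXne
  have hM : 0 ≤ M := le_trans (abs_nonneg _) (hf x0)
  calc |∑ x, f x * (p x - q x)| ≤ ∑ x, |f x * (p x - q x)| :=
        Finset.abs_sum_le_sum_abs _ _
    _ ≤ ∑ x, M * |p x - q x| := by
        apply Finset.sum_le_sum
        intro x _
        rw [abs_mul]
        exact mul_le_mul_of_nonneg_right (hf x) (abs_nonneg _)
    _ = M * ∑ x, |p x - q x| := by rw [Finset.mul_sum]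
    _ ≤ M * Real.sqrt (2 * KL p q) := mul_le_mul_of_nonneg_left hS hM
end

section
/- The EFE belief reward is concave in the belief: for every a ∈ A, all beliefs b₁, b₂ over S, and every λ ∈ [0,1], defining R^{EFE}(b,a) = ∑_s b(s)·R(s,a) + IG(b,a), it holds that R^{EFE}(λ·b₁ + (1−λ)·b₂, a) ≥ λ·R^{EFE}(b₁,a) + (1−λ)·R^{EFE}(b₂,a). -/
/-- Predicted (one-step open-loop) belief `b_a(s') = ∑_s P(s'|s,a) b(s)`. -/
noncomputable def predBelief {S A : Type*} [Fintype S]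
    (T : S → A → S → ℝ) (b : S → ℝ) (a : A) (s' : S) : ℝ :=
  ∑ s, T s a s' * b s

/-- Observation predictive `P(o'|b,a) = ∑_{s'} P(o'|s') b_a(s')`. -/
noncomputable def obsPred {S O A : Type*} [Fintype S]
    (T : S → A → S → ℝ) (L : S → O → ℝ) (b : S → ℝ) (a : A) (o : O) : ℝ :=
  ∑ s', L s' o * predBelief T b a s'

/-- Posterior `τ(b,a,o')(s') = P(o'|s') b_a(s') / P(o'|b,a)`. -/
noncomputable def postBelief {S O A : Type*} [Fintype S]
    (T : S → A → S → ℝ) (L : S → O → ℝ) (b : S → ℝ) (a : A) (o : O) (s' : S) : ℝ :=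
  L s' o * predBelief T b a s' / obsPred T L b a o

/-- Information gain `IG(b,a)`. -/
noncomputable def IG {S O A : Type*} [Fintype S] [Fintype O]
    (T : S → A → S → ℝ) (L : S → O → ℝ) (b : S → ℝ) (a : A) : ℝ :=
  ∑ o, if 0 < obsPred T L b a o then
    obsPred T L b a o * KL (postBelief T L b a o) (predBelief T b a) else 0

/-- EFE belief reward `R^{EFE}(b,a) = ∑_s b(s) R(s,a) + IG(b,a)`. -/
noncomputable def Refe {S O A : Type*} [Fintype S] [Fintype O]
    (T : S → A → S → ℝ) (L : S → O → ℝ) (R : S → A → ℝ) (b : S → ℝ) (a : A) : ℝ :=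
  (∑ s, b s * R s a) + IG T L b a

-- auxiliary lemmas

lemma predBelief_lin {S A : Type*} [Fintype S]
    (T : S → A → S → ℝ) (b₁ b₂ : S → ℝ) (a : A) (lam : ℝ) (s' : S) :
    predBelief T (fun s => lam * b₁ s + (1 - lam) * b₂ s) a s'
      = lam * predBelief T b₁ a s' + (1 - lam) * predBelief T b₂ a s' := by
  simp only [predBelief, Finset.mul_sum, ← Finset.sum_add_distrib]
  exact Finset.sum_congr rfl fun s _ => by ring

lemma obsPred_lin {S O A : Type*} [Fintype S]
    (T : S → A → S → ℝ) (L : S → O → ℝ) (b₁ b₂ : S → ℝ) (a : A) (lam : ℝ) (o : O) :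
    obsPred T L (fun s => lam * b₁ s + (1 - lam) * b₂ s) a o
      = lam * obsPred T L b₁ a o + (1 - lam) * obsPred T L b₂ a o := by
  simp only [obsPred, predBelief_lin, Finset.mul_sum, ← Finset.sum_add_distrib]
  exact Finset.sum_congr rfl fun s _ => by ring

lemma predBelief_nonneg {S A : Type*} [Fintype S]
    (T : S → A → S → ℝ) (hT : ∀ s a s', 0 ≤ T s a s') (b : S → ℝ) (hb : ∀ s, 0 ≤ b s)
    (a : A) (s' : S) : 0 ≤ predBelief T b a s' :=
  Finset.sum_nonneg fun s _ => mul_nonneg (hT s a s') (hb s)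

lemma obsPred_nonneg {S O A : Type*} [Fintype S]
    (T : S → A → S → ℝ) (hT : ∀ s a s', 0 ≤ T s a s')
    (L : S → O → ℝ) (hL : ∀ s o, 0 ≤ L s o) (b : S → ℝ) (hb : ∀ s, 0 ≤ b s)
    (a : A) (o : O) : 0 ≤ obsPred T L b a o :=
  Finset.sum_nonneg fun s' _ =>
    mul_nonneg (hL s' o) (predBelief_nonneg T hT b hb a s')

/-- Key identity: IG equals a linear-in-belief term minus `∑_o φ(P(o|b,a))`
    where `φ x = x * log x`. -/
lemma IG_eq {S O A : Type*} [Fintype S] [Fintype O]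
    (T : S → A → S → ℝ) (hT : ∀ s a s', 0 ≤ T s a s')
    (L : S → O → ℝ) (hL : ∀ s o, 0 ≤ L s o) (b : S → ℝ) (hb : ∀ s, 0 ≤ b s) (a : A) :
    IG T L b a
      = (∑ s', (∑ o, L s' o * Real.log (L s' o)) * predBelief T b a s')
        - ∑ o, obsPred T L b a o * Real.log (obsPred T L b a o) := by
  have hba : ∀ s', 0 ≤ predBelief T b a s' := predBelief_nonneg T hT b hb a
  have key : ∀ o, (if 0 < obsPred T L b a o then
      obsPred T L b a o * KL (postBelief T L b a o) (predBelief T b a) else 0)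
      = (∑ s', (L s' o * Real.log (L s' o)) * predBelief T b a s')
        - obsPred T L b a o * Real.log (obsPred T L b a o) := by
    intro o
    by_cases hP : 0 < obsPred T L b a o
    · rw [if_pos hP]
      set P := obsPred T L b a o with hPdef
      have hstep : ∀ s', (if 0 < postBelief T L b a o s' then
            P * (postBelief T L b a o s' *
              Real.log (postBelief T L b a o s' / predBelief T b a s')) else 0)
          = (L s' o * Real.log (L s' o)) * predBelief T b a s'
            - L s' o * predBelief T b a s' * Real.log P := by
        intro s'
        by_cases h : 0 < L s' o * predBelief T b a s'
        · have hL' : 0 < L s' o := by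
            rcases lt_or_eq_of_le (hL s' o) with h' | h'
            · exact h'
            · exfalso; rw [← h'] at h; simp at h
          have hb' : 0 < predBelief T b a s' := by
            rcases lt_or_eq_of_le (hba s') with h' | h'
            · exact h'
            · exfalso; rw [← h'] at h; simp at h
          have hτ : 0 < postBelief T L b a o s' := by
            unfold postBelief
            exact div_pos h hP
          rw [if_pos hτ]
          unfold postBelief
          rw [← hPdef]
          have harg : L s' o * predBelief T b a s' / P / predBelief T b a s'
              = L s' o / P := by
            field_simp
          rw [harg, Real.log_div (ne_of_gt hL') (ne_of_gt hP)]
          field_simp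
        · have h0 : L s' o * predBelief T b a s' = 0 :=
            le_antisymm (not_lt.1 h) (mul_nonneg (hL s' o) (hba s'))
          have hτ0 : postBelief T L b a o s' = 0 := by
            unfold postBelief; rw [h0, zero_div]
          rw [if_neg (by rw [hτ0]; exact lt_irrefl 0)]
          rcases mul_eq_zero.1 h0 with h' | h'
          · rw [h']; ring
          · rw [h']; ring
      calc P * KL (postBelief T L b a o) (predBelief T b a)
          = ∑ s', (if 0 < postBelief T L b a o s' then
              P * (postBelief T L b a o s' *
                Real.log (postBelief T L b a o s' / predBelief T b a s')) else 0) := by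
            rw [KL, Finset.mul_sum]
            exact Finset.sum_congr rfl fun s' _ => by rw [mul_ite, mul_zero]
        _ = ∑ s', ((L s' o * Real.log (L s' o)) * predBelief T b a s'
              - L s' o * predBelief T b a s' * Real.log P) :=
            Finset.sum_congr rfl fun s' _ => hstep s'
        _ = (∑ s', (L s' o * Real.log (L s' o)) * predBelief T b a s')
              - (∑ s', L s' o * predBelief T b a s') * Real.log P := by
            rw [Finset.sum_sub_distrib, Finset.sum_mul]
        _ = (∑ s', (L s' o * Real.log (L s' o)) * predBelief T b a s')
              - P * Real.log P := by
            have hs : (∑ s' : S, L s' o * predBelief T b a s') = P := hPdef.symm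
            rw [hs]
    · rw [if_neg hP]
      have hP0 : obsPred T L b a o = 0 :=
        le_antisymm (not_lt.1 hP) (obsPred_nonneg T hT L hL b hb a o)
      have hz : ∀ s' ∈ Finset.univ, L s' o * predBelief T b a s' = 0 := by
        have := (Finset.sum_eq_zero_iff_of_nonneg
          (fun s' _ => mul_nonneg (hL s' o) (hba s'))).1 hP0
        exact this
      have : ∀ s' ∈ (Finset.univ : Finset S),
          (L s' o * Real.log (L s' o)) * predBelief T b a s' = 0 := by
        intro s' _
        rcases mul_eq_zero.1 (hz s' (Finset.mem_univ s')) with h' | h'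
        · rw [h']; ring
        · rw [h']; ring
      rw [Finset.sum_eq_zero this, hP0]
      ring
  rw [IG, Finset.sum_congr rfl fun o _ => key o, Finset.sum_sub_distrib,
    Finset.sum_comm]
  congr 1
  exact Finset.sum_congr rfl fun s' _ => by rw [Finset.sum_mul]

/-- The EFE belief reward is concave in the belief (Proposition 2). -/
theorem efe_reward_concave
    {S O A : Type*} [Fintype S] [Fintype O]
    (T : S → A → S → ℝ) (hT : ∀ s a, IsBelief (T s a))
    (L : S → O → ℝ) (hL : ∀ s, IsBelief (L s))
    (R : S → A → ℝ)
    (a : A)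
    (b₁ b₂ : S → ℝ) (hb₁ : IsBelief b₁) (hb₂ : IsBelief b₂)
    (lam : ℝ) (hlam0 : 0 ≤ lam) (hlam1 : lam ≤ 1) :
    Refe T L R (fun s => lam * b₁ s + (1 - lam) * b₂ s) a
      ≥ lam * Refe T L R b₁ a + (1 - lam) * Refe T L R b₂ a := by
  have hT' : ∀ s a s', 0 ≤ T s a s' := fun s a s' => (hT s a).1 s'
  have hL' : ∀ s o, 0 ≤ L s o := fun s o => (hL s).1 o
  set bm : S → ℝ := fun s => lam * b₁ s + (1 - lam) * b₂ s with hbm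
  have hbm0 : ∀ s, 0 ≤ bm s := fun s =>
    add_nonneg (mul_nonneg hlam0 (hb₁.1 s)) (mul_nonneg (by linarith) (hb₂.1 s))
  rw [Refe, Refe, Refe, IG_eq T hT' L hL' bm hbm0 a,
    IG_eq T hT' L hL' b₁ hb₁.1 a, IG_eq T hT' L hL' b₂ hb₂.1 a]
  have hlin1 : ∑ s, bm s * R s a
      = lam * ∑ s, b₁ s * R s a + (1 - lam) * ∑ s, b₂ s * R s a := by
    simp only [hbm, Finset.mul_sum, ← Finset.sum_add_distrib]
    exact Finset.sum_congr rfl fun s _ => by ring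
  have hlin2 : ∑ s', (∑ o, L s' o * Real.log (L s' o)) * predBelief T bm a s'
      = lam * ∑ s', (∑ o, L s' o * Real.log (L s' o)) * predBelief T b₁ a s'
        + (1 - lam) * ∑ s', (∑ o, L s' o * Real.log (L s' o)) * predBelief T b₂ a s' := by
    simp only [Finset.mul_sum, ← Finset.sum_add_distrib]
    refine Finset.sum_congr rfl fun s' _ => ?_
    rw [hbm, predBelief_lin]
    ring
  have hconv : ∑ o, obsPred T L bm a o * Real.log (obsPred T L bm a o)
      ≤ lam * ∑ o, obsPred T L b₁ a o * Real.log (obsPred T L b₁ a o)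
        + (1 - lam) * ∑ o, obsPred T L b₂ a o * Real.log (obsPred T L b₂ a o) := by
    rw [Finset.mul_sum, Finset.mul_sum, ← Finset.sum_add_distrib]
    refine Finset.sum_le_sum fun o _ => ?_
    have h1 : obsPred T L b₁ a o ∈ Set.Ici (0 : ℝ) :=
      Set.mem_Ici.2 (obsPred_nonneg T hT' L hL' b₁ hb₁.1 a o)
    have h2 : obsPred T L b₂ a o ∈ Set.Ici (0 : ℝ) :=
      Set.mem_Ici.2 (obsPred_nonneg T hT' L hL' b₂ hb₂.1 a o)
    have := Real.convexOn_mul_log.2 h1 h2 hlam0 (by linarith : (0:ℝ) ≤ 1 - lam)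
      (by ring)
    simp only [smul_eq_mul] at this
    rw [hbm, obsPred_lin]
    exact this
  linarith
end

section
/- Let R_max = max_{(s,a)} |R(s,a)|. For every k ∈ ℕ, every belief b over S, and every a ∈ A, the closed-loop model advantage under the open-loop value function satisfies 0 ≤ ∑_{o' : P(o'|b,a)>0} P(o'|b,a)·V^{open}_k(τ(b,a,o')) − V^{open}_k(b_a) ≤ (R_max/(1−γ))·√(2·IG(b,a)). -/
set_option linter.unusedSectionVars false
set_option linter.unusedTactic false

/-- Open-loop finite-horizon action value `Q^{open}_k(b,a)`. -/
noncomputable def Qopen {S A : Type*} [Fintype S] [Fintype A] [Nonempty A]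
    (γ : ℝ) (T : S → A → S → ℝ) (R : S → A → ℝ) :
    ℕ → (S → ℝ) → A → ℝ
  | 0, b, a => ∑ s, b s * R s a
  | (k + 1), b, a =>
      (∑ s, b s * R s a) +
        γ * Finset.univ.sup' Finset.univ_nonempty (Qopen γ T R k (predBelief T b a))

/-- Open-loop finite-horizon value `V^{open}_k(b) = max_a Q^{open}_k(b,a)`. -/
noncomputable def Vopen {S A : Type*} [Fintype S] [Fintype A] [Nonempty A]
    (γ : ℝ) (T : S → A → S → ℝ) (R : S → A → ℝ)
    (k : ℕ) (b : S → ℝ) : ℝ :=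
  Finset.univ.sup' Finset.univ_nonempty (Qopen γ T R k b)

section AuxProofs

open Real Finset

/-- The Pinsker auxiliary function. -/
noncomputable def Fph (t : ℝ) : ℝ := t * Real.log t - t + 1 - 3*(t-1)^2/(2*(t+2))

/-- Its derivative on `(0,∞)`. -/
noncomputable def Gph (t : ℝ) : ℝ := Real.log t - 3*(t-1)*(t+5)/(2*(t+2)^2)

lemma hasDerivAt_Fph {t : ℝ} (ht : 0 < t) : HasDerivAt Fph (Gph t) t := by
  have h2 : (2:ℝ)*(t+2) ≠ 0 := by positivity
  have h1 : HasDerivAt (fun t : ℝ => t * Real.log t - t + 1) (Real.log t) t := by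
    have := (((hasDerivAt_id t).mul (Real.hasDerivAt_log ht.ne')).sub (hasDerivAt_id t)).add_const 1
    refine this.congr_deriv ?_
    try simp only [id_eq]
    field_simp
    ring
  have hnum : HasDerivAt (fun t : ℝ => 3*(t-1)^2) (6*(t-1)) t := by
    have := (((hasDerivAt_id t).sub_const 1).pow 2).const_mul (3:ℝ)
    refine this.congr_deriv ?_
    try simp only [id_eq]
    ring
  have hden : HasDerivAt (fun t : ℝ => 2*(t+2)) 2 t := by
    have := ((hasDerivAt_id t).add_const 2).const_mul (2:ℝ)
    refine this.congr_deriv ?_; (try simp only [id_eq]); ring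
  have hq : HasDerivAt (fun t : ℝ => 3*(t-1)^2/(2*(t+2)))
      ((6*(t-1)*(2*(t+2)) - 3*(t-1)^2*2)/(2*(t+2))^2) t := hnum.div hden h2
  have := h1.sub hq
  refine this.congr_deriv ?_
  unfold Gph
  field_simp
  ring

lemma hasDerivAt_Gph {t : ℝ} (ht : 0 < t) :
    HasDerivAt Gph (1/t - 27/((t+2)^3)) t := by
  have h2 : (2:ℝ)*(t+2)^2 ≠ 0 := by positivity
  have hnum : HasDerivAt (fun t : ℝ => 3*(t-1)*(t+5)) (3*(t-1) + 3*(t+5)) t := by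
    have := (((hasDerivAt_id t).sub_const 1).const_mul (3:ℝ)).mul ((hasDerivAt_id t).add_const 5)
    refine this.congr_deriv ?_; (try simp only [id_eq]); ring
  have hden : HasDerivAt (fun t : ℝ => 2*(t+2)^2) (2*(2*(t+2))) t := by
    have := (((hasDerivAt_id t).add_const 2).pow 2).const_mul (2:ℝ)
    refine this.congr_deriv ?_; (try simp only [id_eq]); ring
  have hq := hnum.div hden h2
  have := (Real.hasDerivAt_log ht.ne').sub hq
  refine this.congr_deriv ?_
  have h3 : ((t:ℝ)+2) ≠ 0 := by positivity
  field_simp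
  ring

lemma Gph_one : Gph 1 = 0 := by simp [Gph]

lemma Fph_one : Fph 1 = 0 := by norm_num [Fph]

lemma Gph_mono : MonotoneOn Gph (Set.Ioi 0) := by
  apply monotoneOn_of_hasDerivWithinAt_nonneg (convex_Ioi 0)
    (f' := fun t => 1/t - 27/((t+2)^3))
  · intro x hx
    exact (hasDerivAt_Gph hx).continuousAt.continuousWithinAt
  · intro x hx
    rw [interior_Ioi] at hx
    exact (hasDerivAt_Gph hx).hasDerivWithinAt
  · intro x hx
    rw [interior_Ioi] at hx
    have hx : (0:ℝ) < x := hx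
    rw [sub_nonneg, div_le_div_iff₀ (by positivity) hx]
    nlinarith [mul_nonneg (sq_nonneg (x-1)) (by linarith : (0:ℝ) ≤ x + 8)]

lemma Fph_nonneg {t : ℝ} (ht : 0 < t) : 0 ≤ Fph t := by
  rcases le_or_gt 1 t with h1 | h1
  · have hmono : MonotoneOn Fph (Set.Ici 1) := by
      apply monotoneOn_of_hasDerivWithinAt_nonneg (convex_Ici 1) (f' := Gph)
      · intro x hx
        exact (hasDerivAt_Fph (lt_of_lt_of_le one_pos hx)).continuousAt.continuousWithinAt
      · intro x hx
        rw [interior_Ici] at hx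
        exact (hasDerivAt_Fph (lt_trans one_pos hx)).hasDerivWithinAt
      · intro x hx
        rw [interior_Ici] at hx
        have := Gph_mono (Set.mem_Ioi.2 one_pos) (Set.mem_Ioi.2 (lt_trans one_pos hx)) hx.le
        rw [Gph_one] at this; exact this
    have := hmono (Set.mem_Ici.2 le_rfl) (Set.mem_Ici.2 h1) h1
    rw [Fph_one] at this; exact this
  · have hanti : AntitoneOn Fph (Set.Ioc 0 1) := by
      apply antitoneOn_of_hasDerivWithinAt_nonpos (convex_Ioc 0 1) (f' := Gph)
      · intro x hx
        exact (hasDerivAt_Fph hx.1).continuousAt.continuousWithinAt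
      · intro x hx
        rw [interior_Ioc] at hx
        exact (hasDerivAt_Fph hx.1).hasDerivWithinAt
      · intro x hx
        rw [interior_Ioc] at hx
        have := Gph_mono (Set.mem_Ioi.2 hx.1) (Set.mem_Ioi.2 one_pos) hx.2.le
        rw [Gph_one] at this; exact this
    have := hanti (Set.mem_Ioc.2 ⟨ht, h1.le⟩) (Set.mem_Ioc.2 ⟨one_pos, le_rfl⟩) h1.le
    rw [Fph_one] at this; exact this

/-- Pointwise Pinsker bound. -/
lemma pointwise_pinsker {x y : ℝ} (hx : 0 ≤ x) (hy : 0 < y) :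
    3*(x-y)^2/(2*(x+2*y)) ≤ x * Real.log (x/y) - x + y := by
  rcases eq_or_lt_of_le hx with h0 | h0
  · subst x
    rw [div_le_iff₀ (by positivity)]
    simp only [zero_sub, zero_add, zero_mul, zero_div]
    nlinarith [hy]
  · have hF := Fph_nonneg (div_pos h0 hy)
    have hkey : x * Real.log (x/y) - x + y - 3*(x-y)^2/(2*(x+2*y)) = y * Fph (x/y) := by
      unfold Fph
      have h1 : x + 2*y ≠ 0 := by positivity
      have h2 : x/y + 2 ≠ 0 := by positivity
      field_simp
    nlinarith [mul_nonneg hy.le hF]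

/-- **Pinsker's inequality** on a finite set. -/
lemma pinsker_fin {X : Type*} [Fintype X] (p q : X → ℝ)
    (hp : IsBelief p) (hq : IsBelief q) (hac : ∀ x, q x = 0 → p x = 0) :
    (∑ x, |p x - q x|)^2 ≤ 2 * KL p q := by
  have key : ∀ x, 3*(p x - q x)^2/(p x + 2*q x) ≤
      2*((if 0 < p x then p x * Real.log (p x / q x) else 0) - p x + q x) := by
    intro x
    by_cases hx : 0 < p x
    · rw [if_pos hx]
      have hqx : 0 < q x := by
        rcases (hq.1 x).lt_or_eq with h | h
        · exact h
        · exact absurd (hac x h.symm) (by linarith)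
      have h := pointwise_pinsker (hp.1 x) hqx
      have hc : (0:ℝ) < p x + 2*q x := by linarith
      have h2 : 3*(p x - q x)^2/(p x + 2*q x) = 2*(3*(p x - q x)^2/(2*(p x + 2*q x))) := by
        field_simp
      rw [h2]; linarith
    · rw [if_neg hx]
      have hpx : p x = 0 := le_antisymm (not_lt.1 hx) (hp.1 x)
      rw [hpx]
      rcases (hq.1 x).lt_or_eq with h | h
      · rw [div_le_iff₀ (by linarith)]
        nlinarith
      · rw [← h]; norm_num
  -- sum of p - q is zero
  have hsum : ∑ x, (p x - q x) = 0 := by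
    rw [Finset.sum_sub_distrib, hp.2, hq.2]; ring
  have hKL : ∑ x, 3*(p x - q x)^2/(p x + 2*q x) ≤ 2 * KL p q := by
    calc ∑ x, 3*(p x - q x)^2/(p x + 2*q x)
        ≤ ∑ x, 2*((if 0 < p x then p x * Real.log (p x / q x) else 0) - p x + q x) :=
          Finset.sum_le_sum fun x _ => key x
      _ = 2 * KL p q := by
          unfold KL
          rw [← Finset.mul_sum, Finset.sum_add_distrib, Finset.sum_sub_distrib, hp.2, hq.2]
          ring
  -- Cauchy–Schwarz
  set f : X → ℝ := fun x => |p x - q x| / Real.sqrt (p x + 2*q x) with hf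
  set g : X → ℝ := fun x => Real.sqrt (p x + 2*q x) with hg
  have hzero : ∀ x, p x + 2*q x = 0 → p x = 0 ∧ q x = 0 := fun x h =>
    ⟨by linarith [hp.1 x, hq.1 x], by linarith [hp.1 x, hq.1 x]⟩
  have hfg : ∀ x, f x * g x = |p x - q x| := by
    intro x
    by_cases h : p x + 2*q x = 0
    · obtain ⟨h1, h2⟩ := hzero x h
      simp [hf, hg, h1, h2]
    · have hpos : 0 < p x + 2*q x :=
        lt_of_le_of_ne (by linarith [hp.1 x, hq.1 x]) (Ne.symm h)
      simp only [hf, hg]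
      rw [div_mul_cancel₀]
      exact Real.sqrt_ne_zero'.2 hpos
  have hf2 : ∀ x, f x ^ 2 = (p x - q x)^2/(p x + 2*q x) := by
    intro x
    simp only [hf, div_pow, sq_abs, Real.sq_sqrt (by linarith [hp.1 x, hq.1 x] : (0:ℝ) ≤ p x + 2*q x)]
  have hg2 : ∀ x, g x ^ 2 = p x + 2*q x := fun x =>
    Real.sq_sqrt (by linarith [hp.1 x, hq.1 x])
  have hCS := Finset.sum_mul_sq_le_sq_mul_sq Finset.univ f g
  rw [show ∑ x, f x * g x = ∑ x, |p x - q x| from Finset.sum_congr rfl fun x _ => hfg x] at hCS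
  have hgsum : ∑ x, g x ^ 2 = 3 := by
    rw [Finset.sum_congr rfl fun x _ => hg2 x, Finset.sum_add_distrib, hp.2, ← Finset.mul_sum, hq.2]
    norm_num
  have hfsum : ∑ x, f x ^ 2 = ∑ x, (p x - q x)^2/(p x + 2*q x) :=
    Finset.sum_congr rfl fun x _ => hf2 x
  rw [hgsum, hfsum] at hCS
  have h3 : (∑ x, (p x - q x)^2/(p x + 2*q x)) * 3 = ∑ x, 3*(p x - q x)^2/(p x + 2*q x) := by
    rw [Finset.sum_mul]
    exact Finset.sum_congr rfl fun x _ => by rw [div_mul_eq_mul_div, mul_comm]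
  calc (∑ x, |p x - q x|)^2 ≤ (∑ x, (p x - q x)^2/(p x + 2*q x)) * 3 := hCS
    _ = ∑ x, 3*(p x - q x)^2/(p x + 2*q x) := h3
    _ ≤ 2 * KL p q := hKL

section Struct

variable {S O A : Type*} [Fintype S] [Fintype O] [Fintype A] [Nonempty S] [Nonempty A]

/-- ℓ¹-contraction of the prediction step. -/
lemma pred_l1 (T : S → A → S → ℝ) (hT : ∀ s a, IsBelief (T s a)) (p q : S → ℝ) (a : A) :
    ∑ s', |predBelief T p a s' - predBelief T q a s'| ≤ ∑ s, |p s - q s| := by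
  have h1 : ∀ s', |predBelief T p a s' - predBelief T q a s'| ≤
      ∑ s, T s a s' * |p s - q s| := by
    intro s'
    have : predBelief T p a s' - predBelief T q a s' = ∑ s, T s a s' * (p s - q s) := by
      unfold predBelief
      rw [← Finset.sum_sub_distrib]
      exact Finset.sum_congr rfl fun s _ => by ring
    rw [this]
    refine (Finset.abs_sum_le_sum_abs _ _).trans (le_of_eq ?_)
    exact Finset.sum_congr rfl fun s _ => by
      rw [abs_mul, abs_of_nonneg ((hT s a).1 s')]
  calc ∑ s', |predBelief T p a s' - predBelief T q a s'|
      ≤ ∑ s', ∑ s, T s a s' * |p s - q s| := Finset.sum_le_sum fun s' _ => h1 s'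
    _ = ∑ s, (∑ s', T s a s') * |p s - q s| := by
        rw [Finset.sum_comm]
        exact Finset.sum_congr rfl fun s _ => by rw [Finset.sum_mul]
    _ = ∑ s, |p s - q s| := Finset.sum_congr rfl fun s _ => by rw [(hT s a).2, one_mul]

lemma qopen_lip (γ : ℝ) (hγ0 : 0 ≤ γ) (hγ1 : γ < 1)
    (T : S → A → S → ℝ) (hT : ∀ s a, IsBelief (T s a))
    (R : S → A → ℝ) (Rmax : ℝ) (hR : ∀ s a, |R s a| ≤ Rmax) :
    ∀ (k : ℕ) (p q : S → ℝ) (a : A),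
      |Qopen γ T R k p a - Qopen γ T R k q a| ≤ (Rmax/(1-γ)) * ∑ s, |p s - q s| := by
  have hRm : 0 ≤ Rmax := le_trans (abs_nonneg _) (hR Classical.ofNonempty Classical.ofNonempty)
  have h1γ : 0 < 1 - γ := by linarith
  have hC : 0 ≤ Rmax/(1-γ) := div_nonneg hRm h1γ.le
  have hbase : ∀ (p q : S → ℝ) (a : A),
      |∑ s, p s * R s a - ∑ s, q s * R s a| ≤ Rmax * ∑ s, |p s - q s| := by
    intro p q a
    rw [← Finset.sum_sub_distrib]
    refine (Finset.abs_sum_le_sum_abs _ _).trans ?_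
    rw [Finset.mul_sum]
    refine Finset.sum_le_sum fun s _ => ?_
    rw [show p s * R s a - q s * R s a = (p s - q s) * R s a by ring, abs_mul, mul_comm]
    exact mul_le_mul_of_nonneg_right (hR s a) (abs_nonneg _)
  intro k
  induction k with
  | zero =>
    intro p q a
    show |(∑ s, p s * R s a) - ∑ s, q s * R s a| ≤ _
    refine (hbase p q a).trans ?_
    have habs : 0 ≤ ∑ s, |p s - q s| := Finset.sum_nonneg fun s _ => abs_nonneg _
    refine mul_le_mul_of_nonneg_right ?_ habs
    rw [le_div_iff₀ h1γ]
    nlinarith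
  | succ k ih =>
    intro p q a
    have hsup : ∀ (p q : S → ℝ),
        |Finset.univ.sup' Finset.univ_nonempty (Qopen γ T R k p)
          - Finset.univ.sup' Finset.univ_nonempty (Qopen γ T R k q)|
          ≤ (Rmax/(1-γ)) * ∑ s, |p s - q s| := by
      intro p q
      rw [abs_sub_le_iff]
      constructor
      · rw [sub_le_iff_le_add]
        refine Finset.sup'_le _ _ fun a' _ => ?_
        have h2 := Finset.le_sup' (Qopen γ T R k q) (Finset.mem_univ a')
        have h3 := abs_le.1 (ih p q a')
        linarith
      · rw [sub_le_iff_le_add]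
        refine Finset.sup'_le _ _ fun a' _ => ?_
        have h2 := Finset.le_sup' (Qopen γ T R k p) (Finset.mem_univ a')
        have h3 := abs_le.1 (ih p q a')
        linarith
    have hV := hsup (predBelief T p a) (predBelief T q a)
    have hpl := pred_l1 T hT p q a
    set X := Finset.univ.sup' Finset.univ_nonempty (Qopen γ T R k (predBelief T p a)) with hX
    set Y := Finset.univ.sup' Finset.univ_nonempty (Qopen γ T R k (predBelief T q a)) with hY
    show |((∑ s, p s * R s a) + γ * X) - ((∑ s, q s * R s a) + γ * Y)| ≤ _
    have hre : ((∑ s, p s * R s a) + γ * X) - ((∑ s, q s * R s a) + γ * Y)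
        = ((∑ s, p s * R s a) - (∑ s, q s * R s a)) + γ * (X - Y) := by ring
    rw [hre]
    have step : |((∑ s, p s * R s a) - (∑ s, q s * R s a)) + γ * (X - Y)|
        ≤ Rmax * (∑ s, |p s - q s|) + γ * ((Rmax/(1-γ)) * ∑ s, |p s - q s|) := by
      refine (abs_add_le _ _).trans ?_
      refine add_le_add (hbase p q a) ?_
      rw [abs_mul, abs_of_nonneg hγ0]
      refine mul_le_mul_of_nonneg_left (hV.trans ?_) hγ0
      exact mul_le_mul_of_nonneg_left hpl hC
    refine step.trans (le_of_eq ?_)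
    field_simp
    ring
  
lemma vopen_lip (γ : ℝ) (hγ0 : 0 ≤ γ) (hγ1 : γ < 1)
    (T : S → A → S → ℝ) (hT : ∀ s a, IsBelief (T s a))
    (R : S → A → ℝ) (Rmax : ℝ) (hR : ∀ s a, |R s a| ≤ Rmax)
    (k : ℕ) (p q : S → ℝ) :
    |Vopen γ T R k p - Vopen γ T R k q| ≤ (Rmax/(1-γ)) * ∑ s, |p s - q s| := by
  unfold Vopen
  rw [abs_sub_le_iff]
  constructor
  · rw [sub_le_iff_le_add]
    refine Finset.sup'_le _ _ fun a' _ => ?_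
    have h2 := Finset.le_sup' (Qopen γ T R k q) (Finset.mem_univ a')
    have h3 := abs_le.1 (qopen_lip γ hγ0 hγ1 T hT R Rmax hR k p q a')
    linarith
  · rw [sub_le_iff_le_add]
    refine Finset.sup'_le _ _ fun a' _ => ?_
    have h2 := Finset.le_sup' (Qopen γ T R k p) (Finset.mem_univ a')
    have h3 := abs_le.1 (qopen_lip γ hγ0 hγ1 T hT R Rmax hR k p q a')
    linarith

lemma qopen_mix_le (γ : ℝ) (hγ0 : 0 ≤ γ)
    (T : S → A → S → ℝ) (R : S → A → ℝ) :
    ∀ (k : ℕ) (w : O → ℝ) (μ : O → S → ℝ), (∀ o, 0 ≤ w o) → ∀ a : A,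
      Qopen γ T R k (fun s => ∑ o, w o * μ o s) a ≤ ∑ o, w o * Qopen γ T R k (μ o) a := by
  intro k
  induction k with
  | zero =>
    intro w μ hw a
    show ∑ s, (∑ o, w o * μ o s) * R s a ≤ ∑ o, w o * ∑ s, μ o s * R s a
    refine le_of_eq ?_
    simp_rw [Finset.sum_mul, Finset.mul_sum]
    rw [Finset.sum_comm]
    exact Finset.sum_congr rfl fun o _ => Finset.sum_congr rfl fun s _ => by ring
  | succ k ih =>
    intro w μ hw a
    have hlin : ∑ s, (∑ o, w o * μ o s) * R s a = ∑ o, w o * ∑ s, μ o s * R s a := by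
      simp_rw [Finset.sum_mul, Finset.mul_sum]
      rw [Finset.sum_comm]
      exact Finset.sum_congr rfl fun o _ => Finset.sum_congr rfl fun s _ => by ring
    have hpred : predBelief T (fun s => ∑ o, w o * μ o s) a =
        fun s' => ∑ o, w o * predBelief T (μ o) a s' := by
      funext s'
      unfold predBelief
      simp_rw [Finset.mul_sum]
      rw [Finset.sum_comm]
      exact Finset.sum_congr rfl fun o _ => Finset.sum_congr rfl fun s _ => by ring
    have hsup : Finset.univ.sup' Finset.univ_nonempty
          (Qopen γ T R k (predBelief T (fun s => ∑ o, w o * μ o s) a))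
        ≤ ∑ o, w o * Finset.univ.sup' Finset.univ_nonempty
          (Qopen γ T R k (predBelief T (μ o) a)) := by
      refine Finset.sup'_le _ _ fun a' _ => ?_
      rw [hpred]
      refine (ih w (fun o => predBelief T (μ o) a) hw a').trans ?_
      refine Finset.sum_le_sum fun o _ => ?_
      exact mul_le_mul_of_nonneg_left
        (Finset.le_sup' (Qopen γ T R k (predBelief T (μ o) a)) (Finset.mem_univ a')) (hw o)
    show (∑ s, (∑ o, w o * μ o s) * R s a) + γ * _ ≤
      ∑ o, w o * ((∑ s, μ o s * R s a) + γ * _)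
    calc (∑ s, (∑ o, w o * μ o s) * R s a) + γ * Finset.univ.sup' Finset.univ_nonempty
          (Qopen γ T R k (predBelief T (fun s => ∑ o, w o * μ o s) a))
        ≤ (∑ o, w o * ∑ s, μ o s * R s a) + γ * ∑ o, w o * Finset.univ.sup' Finset.univ_nonempty
          (Qopen γ T R k (predBelief T (μ o) a)) := by
          rw [hlin]
          exact add_le_add_right (mul_le_mul_of_nonneg_left hsup hγ0) _
      _ = ∑ o, w o * ((∑ s, μ o s * R s a) + γ * Finset.univ.sup' Finset.univ_nonempty
          (Qopen γ T R k (predBelief T (μ o) a))) := by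
          rw [Finset.mul_sum, ← Finset.sum_add_distrib]
          exact Finset.sum_congr rfl fun o _ => by ring

lemma vopen_mix_le (γ : ℝ) (hγ0 : 0 ≤ γ)
    (T : S → A → S → ℝ) (R : S → A → ℝ)
    (k : ℕ) (w : O → ℝ) (μ : O → S → ℝ) (hw : ∀ o, 0 ≤ w o) :
    Vopen γ T R k (fun s => ∑ o, w o * μ o s) ≤ ∑ o, w o * Vopen γ T R k (μ o) := by
  unfold Vopen
  refine Finset.sup'_le _ _ fun a _ => ?_
  refine (qopen_mix_le γ hγ0 T R k w μ hw a).trans ?_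
  refine Finset.sum_le_sum fun o _ => ?_
  exact mul_le_mul_of_nonneg_left (Finset.le_sup' (Qopen γ T R k (μ o)) (Finset.mem_univ a)) (hw o)

end Struct

end AuxProofs

/-- Closed-loop model advantage under the open-loop value function is
non-negative and bounded by information gain (finite-horizon Proposition 4). -/
theorem closed_loop_model_advantage_bound
    {S O A : Type*} [Fintype S] [Fintype O] [Fintype A] [Nonempty S] [Nonempty A]
    (γ : ℝ) (hγ0 : 0 < γ) (hγ1 : γ < 1)
    (T : S → A → S → ℝ) (hT : ∀ s a, IsBelief (T s a))
    (L : S → O → ℝ) (hL : ∀ s, IsBelief (L s))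
    (R : S → A → ℝ)
    (Rmax : ℝ)
    (hRmax : Rmax = Finset.univ.sup' Finset.univ_nonempty
        (fun p : S × A => |R p.1 p.2|)) :
    ∀ (k : ℕ) (b : S → ℝ), IsBelief b → ∀ a : A,
      0 ≤ (∑ o, if 0 < obsPred T L b a o then
              obsPred T L b a o * Vopen γ T R k (postBelief T L b a o) else 0)
            - Vopen γ T R k (predBelief T b a) ∧
      (∑ o, if 0 < obsPred T L b a o then
              obsPred T L b a o * Vopen γ T R k (postBelief T L b a o) else 0)
            - Vopen γ T R k (predBelief T b a)
        ≤ (Rmax / (1 - γ)) * Real.sqrt (2 * IG T L b a) := by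
  intro k b hb a
  have h1γ : 0 < 1 - γ := by linarith
  have hR : ∀ s a', |R s a'| ≤ Rmax := by
    intro s a'
    rw [hRmax]
    exact Finset.le_sup' (fun p : S × A => |R p.1 p.2|) (Finset.mem_univ (s, a'))
  have hRm : 0 ≤ Rmax := le_trans (abs_nonneg _) (hR Classical.ofNonempty Classical.ofNonempty)
  have hC0 : 0 ≤ Rmax / (1 - γ) := div_nonneg hRm h1γ.le
  -- belief facts
  have hba : IsBelief (predBelief T b a) := by
    constructor
    · intro s'
      exact Finset.sum_nonneg fun s _ => mul_nonneg ((hT s a).1 s') (hb.1 s)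
    · unfold predBelief
      rw [Finset.sum_comm]
      calc ∑ s, ∑ s', T s a s' * b s
          = ∑ s, b s := Finset.sum_congr rfl fun s _ => by
            rw [← Finset.sum_mul, (hT s a).2, one_mul]
        _ = 1 := hb.2
  have hwge : ∀ o, 0 ≤ obsPred T L b a o := fun o =>
    Finset.sum_nonneg fun s' _ => mul_nonneg ((hL s').1 o) (hba.1 s')
  have hwsum : ∑ o, obsPred T L b a o = 1 := by
    unfold obsPred
    rw [Finset.sum_comm]
    calc ∑ s', ∑ o, L s' o * predBelief T b a s'
        = ∑ s', predBelief T b a s' := Finset.sum_congr rfl fun s' _ => by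
          rw [← Finset.sum_mul, (hL s').2, one_mul]
      _ = 1 := hba.2
  have hterm0 : ∀ o, obsPred T L b a o = 0 → ∀ s', L s' o * predBelief T b a s' = 0 := by
    intro o h s'
    exact (Finset.sum_eq_zero_iff_of_nonneg
      (fun s' _ => mul_nonneg ((hL s').1 o) (hba.1 s'))).1 h s' (Finset.mem_univ s')
  have hmix : ∀ s', ∑ o, obsPred T L b a o * postBelief T L b a o s' = predBelief T b a s' := by
    intro s'
    have h1 : ∀ o, obsPred T L b a o * postBelief T L b a o s' = L s' o * predBelief T b a s' := by
      intro o
      by_cases h : obsPred T L b a o = 0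
      · rw [h, zero_mul, hterm0 o h s']
      · unfold postBelief
        rw [mul_comm, div_mul_cancel₀ _ h]
    rw [Finset.sum_congr rfl fun o _ => h1 o, ← Finset.sum_mul, (hL s').2, one_mul]
  have hpostB : ∀ o, 0 < obsPred T L b a o → IsBelief (postBelief T L b a o) := by
    intro o hpos
    constructor
    · intro s'
      exact div_nonneg (mul_nonneg ((hL s').1 o) (hba.1 s')) (hwge o)
    · unfold postBelief
      rw [← Finset.sum_div]
      exact div_self hpos.ne'
  have hacpost : ∀ o s', predBelief T b a s' = 0 → postBelief T L b a o s' = 0 := by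
    intro o s' h
    unfold postBelief
    rw [h, mul_zero, zero_div]
  -- rewrite the if-sums
  have hVsum : (∑ o, if 0 < obsPred T L b a o then
        obsPred T L b a o * Vopen γ T R k (postBelief T L b a o) else 0)
      = ∑ o, obsPred T L b a o * Vopen γ T R k (postBelief T L b a o) := by
    refine Finset.sum_congr rfl fun o _ => ?_
    by_cases h : 0 < obsPred T L b a o
    · rw [if_pos h]
    · rw [if_neg h, le_antisymm (not_lt.1 h) (hwge o), zero_mul]
  have hIGsum : IG T L b a
      = ∑ o, obsPred T L b a o * KL (postBelief T L b a o) (predBelief T b a) := by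
    unfold IG
    refine Finset.sum_congr rfl fun o _ => ?_
    by_cases h : 0 < obsPred T L b a o
    · rw [if_pos h]
    · rw [if_neg h, le_antisymm (not_lt.1 h) (hwge o), zero_mul]
  rw [hVsum]
  -- lower bound via the mixture property
  have hlow : Vopen γ T R k (predBelief T b a)
      ≤ ∑ o, obsPred T L b a o * Vopen γ T R k (postBelief T L b a o) := by
    have h := vopen_mix_le γ hγ0.le T R k (fun o => obsPred T L b a o)
      (fun o => postBelief T L b a o) hwge
    have hfun : (fun s => ∑ o, obsPred T L b a o * postBelief T L b a o s)
        = predBelief T b a := funext hmix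
    rw [hfun] at h
    exact h
  refine ⟨by linarith, ?_⟩
  -- upper bound
  have hdiff : (∑ o, obsPred T L b a o * Vopen γ T R k (postBelief T L b a o))
        - Vopen γ T R k (predBelief T b a)
      = ∑ o, obsPred T L b a o *
          (Vopen γ T R k (postBelief T L b a o) - Vopen γ T R k (predBelief T b a)) := by
    simp_rw [mul_sub]
    rw [Finset.sum_sub_distrib, ← Finset.sum_mul, hwsum, one_mul]
  have hterm : ∀ o, obsPred T L b a o *
        (Vopen γ T R k (postBelief T L b a o) - Vopen γ T R k (predBelief T b a))
      ≤ obsPred T L b a o * ((Rmax / (1 - γ)) *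
          Real.sqrt (2 * KL (postBelief T L b a o) (predBelief T b a))) := by
    intro o
    rcases (hwge o).lt_or_eq with hpos | h0
    · refine mul_le_mul_of_nonneg_left ?_ hpos.le
      have hlip := vopen_lip γ hγ0.le hγ1 T hT R Rmax hR k (postBelief T L b a o)
        (predBelief T b a)
      have hpin := pinsker_fin (postBelief T L b a o) (predBelief T b a)
        (hpostB o hpos) hba (fun s' h => hacpost o s' h)
      have hsq : ∑ s', |postBelief T L b a o s' - predBelief T b a s'|
          ≤ Real.sqrt (2 * KL (postBelief T L b a o) (predBelief T b a)) :=
        Real.le_sqrt_of_sq_le hpin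
      calc Vopen γ T R k (postBelief T L b a o) - Vopen γ T R k (predBelief T b a)
          ≤ |Vopen γ T R k (postBelief T L b a o) - Vopen γ T R k (predBelief T b a)| :=
            le_abs_self _
        _ ≤ (Rmax / (1 - γ)) * ∑ s', |postBelief T L b a o s' - predBelief T b a s'| := hlip
        _ ≤ (Rmax / (1 - γ)) *
            Real.sqrt (2 * KL (postBelief T L b a o) (predBelief T b a)) :=
            mul_le_mul_of_nonneg_left hsq hC0
    · rw [← h0, zero_mul, zero_mul]
  have hKnn : ∀ o, 0 ≤ obsPred T L b a o *
      (2 * KL (postBelief T L b a o) (predBelief T b a)) := by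
    intro o
    rcases (hwge o).lt_or_eq with hpos | h0
    · have hpin := pinsker_fin (postBelief T L b a o) (predBelief T b a)
        (hpostB o hpos) hba (fun s' h => hacpost o s' h)
      exact mul_nonneg hpos.le (le_trans (sq_nonneg _) hpin)
    · rw [← h0, zero_mul]
  have hstep : ∑ o, obsPred T L b a o *
        (Vopen γ T R k (postBelief T L b a o) - Vopen γ T R k (predBelief T b a))
      ≤ (Rmax / (1 - γ)) * ∑ o, obsPred T L b a o *
          Real.sqrt (2 * KL (postBelief T L b a o) (predBelief T b a)) := by
    rw [Finset.mul_sum]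
    exact Finset.sum_le_sum fun o _ => (hterm o).trans (le_of_eq (by ring))
  have hCS : (∑ o, obsPred T L b a o *
        Real.sqrt (2 * KL (postBelief T L b a o) (predBelief T b a)))^2
      ≤ 2 * IG T L b a := by
    have h1 : ∀ o, obsPred T L b a o *
        Real.sqrt (2 * KL (postBelief T L b a o) (predBelief T b a))
        = Real.sqrt (obsPred T L b a o) * Real.sqrt (obsPred T L b a o *
            (2 * KL (postBelief T L b a o) (predBelief T b a))) := by
      intro o
      rw [← Real.sqrt_mul (hwge o),
        show obsPred T L b a o * (obsPred T L b a o *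
            (2 * KL (postBelief T L b a o) (predBelief T b a)))
          = obsPred T L b a o ^ 2 *
            (2 * KL (postBelief T L b a o) (predBelief T b a)) by ring,
        Real.sqrt_mul (sq_nonneg _), Real.sqrt_sq (hwge o)]
    rw [Finset.sum_congr rfl fun o _ => h1 o]
    refine (Finset.sum_mul_sq_le_sq_mul_sq Finset.univ _ _).trans (le_of_eq ?_)
    have h2 : ∑ o, Real.sqrt (obsPred T L b a o) ^ 2 = 1 := by
      rw [Finset.sum_congr rfl fun o _ => Real.sq_sqrt (hwge o)]
      exact hwsum
    have h3 : ∑ o, Real.sqrt (obsPred T L b a o *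
          (2 * KL (postBelief T L b a o) (predBelief T b a))) ^ 2
        = 2 * IG T L b a := by
      rw [Finset.sum_congr rfl fun o _ => Real.sq_sqrt (hKnn o), hIGsum, Finset.mul_sum]
      exact Finset.sum_congr rfl fun o _ => by ring
    rw [h2, h3, one_mul]
  have hsqrt : ∑ o, obsPred T L b a o *
        Real.sqrt (2 * KL (postBelief T L b a o) (predBelief T b a))
      ≤ Real.sqrt (2 * IG T L b a) := Real.le_sqrt_of_sq_le hCS
  calc (∑ o, obsPred T L b a o * Vopen γ T R k (postBelief T L b a o))
        - Vopen γ T R k (predBelief T b a)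
      = ∑ o, obsPred T L b a o *
          (Vopen γ T R k (postBelief T L b a o) - Vopen γ T R k (predBelief T b a)) := hdiff
    _ ≤ (Rmax / (1 - γ)) * ∑ o, obsPred T L b a o *
          Real.sqrt (2 * KL (postBelief T L b a o) (predBelief T b a)) := hstep
    _ ≤ (Rmax / (1 - γ)) * Real.sqrt (2 * IG T L b a) :=
        mul_le_mul_of_nonneg_left hsqrt hC0
end

section
/- For every k ∈ ℕ, the open-loop value function V^{open}_k is convex on beliefs: for all beliefs b₁, b₂ over S and all λ ∈ [0,1], V^{open}_k(λ·b₁ + (1−λ)·b₂) ≤ λ·V^{open}_k(b₁) + (1−λ)·V^{open}_k(b₂). -/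
lemma predBelief_mix {S A : Type*} [Fintype S]
    (T : S → A → S → ℝ) (b₁ b₂ : S → ℝ) (a : A) (lam : ℝ) :
    predBelief T (fun s => lam * b₁ s + (1 - lam) * b₂ s) a =
      fun s' => lam * predBelief T b₁ a s' + (1 - lam) * predBelief T b₂ a s' := by
  funext s'
  simp only [predBelief, Finset.mul_sum, ← Finset.sum_add_distrib]
  apply Finset.sum_congr rfl
  intro s _
  ring

lemma Vopen_mix_le {S A : Type*} [Fintype S] [Fintype A] [Nonempty A]
    (γ : ℝ) (hγ : 0 ≤ γ) (T : S → A → S → ℝ) (R : S → A → ℝ) :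
    ∀ (k : ℕ) (b₁ b₂ : S → ℝ) (lam : ℝ), 0 ≤ lam → lam ≤ 1 →
      Vopen γ T R k (fun s => lam * b₁ s + (1 - lam) * b₂ s)
        ≤ lam * Vopen γ T R k b₁ + (1 - lam) * Vopen γ T R k b₂ := by
  intro k
  induction k with
  | zero =>
    intro b₁ b₂ lam h0 h1
    apply Finset.sup'_le
    intro a _
    have h1' : (0:ℝ) ≤ 1 - lam := by linarith
    calc Qopen γ T R 0 (fun s => lam * b₁ s + (1 - lam) * b₂ s) a
        = lam * Qopen γ T R 0 b₁ a + (1 - lam) * Qopen γ T R 0 b₂ a := by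
          simp only [Qopen, Finset.mul_sum, ← Finset.sum_add_distrib]
          apply Finset.sum_congr rfl; intro s _; ring
      _ ≤ lam * Vopen γ T R 0 b₁ + (1 - lam) * Vopen γ T R 0 b₂ := by
          gcongr <;> exact Finset.le_sup' _ (Finset.mem_univ a)
  | succ k ih =>
    intro b₁ b₂ lam h0 h1
    apply Finset.sup'_le
    intro a _
    have h1' : (0:ℝ) ≤ 1 - lam := by linarith
    have hlin : (∑ s, (lam * b₁ s + (1 - lam) * b₂ s) * R s a)
        = lam * (∑ s, b₁ s * R s a) + (1 - lam) * (∑ s, b₂ s * R s a) := by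
      simp only [Finset.mul_sum, ← Finset.sum_add_distrib]
      apply Finset.sum_congr rfl; intro s _; ring
    have hV : Vopen γ T R k (predBelief T (fun s => lam * b₁ s + (1 - lam) * b₂ s) a)
        ≤ lam * Vopen γ T R k (predBelief T b₁ a) + (1 - lam) * Vopen γ T R k (predBelief T b₂ a) := by
      rw [predBelief_mix]
      exact ih (predBelief T b₁ a) (predBelief T b₂ a) lam h0 h1
    calc Qopen γ T R (k+1) (fun s => lam * b₁ s + (1 - lam) * b₂ s) a
        = (∑ s, (lam * b₁ s + (1 - lam) * b₂ s) * R s a)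
            + γ * Vopen γ T R k (predBelief T (fun s => lam * b₁ s + (1 - lam) * b₂ s) a) := rfl
      _ ≤ lam * ((∑ s, b₁ s * R s a) + γ * Vopen γ T R k (predBelief T b₁ a))
            + (1 - lam) * ((∑ s, b₂ s * R s a) + γ * Vopen γ T R k (predBelief T b₂ a)) := by
          rw [hlin]
          nlinarith [mul_le_mul_of_nonneg_left hV hγ]
      _ = lam * Qopen γ T R (k+1) b₁ a + (1 - lam) * Qopen γ T R (k+1) b₂ a := rfl
      _ ≤ lam * Vopen γ T R (k+1) b₁ + (1 - lam) * Vopen γ T R (k+1) b₂ := by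
          gcongr <;> exact Finset.le_sup' _ (Finset.mem_univ a)

/-- The open-loop value function is convex on beliefs. -/
theorem open_loop_value_convex
    {S A : Type*} [Fintype S] [Fintype A] [Nonempty A]
    (γ : ℝ) (hγ0 : 0 < γ) (hγ1 : γ < 1)
    (T : S → A → S → ℝ) (hT : ∀ s a, IsBelief (T s a))
    (R : S → A → ℝ) :
    ∀ (k : ℕ) (b₁ b₂ : S → ℝ), IsBelief b₁ → IsBelief b₂ →
      ∀ lam : ℝ, 0 ≤ lam → lam ≤ 1 →
      Vopen γ T R k (fun s => lam * b₁ s + (1 - lam) * b₂ s)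
        ≤ lam * Vopen γ T R k b₁ + (1 - lam) * Vopen γ T R k b₂ := by
  intro k b₁ b₂ _ _ lam h0 h1
  exact Vopen_mix_le γ (le_of_lt hγ0) T R k b₁ b₂ lam h0 h1
end

section
/- Assume P̃_O(o) > 0 for all o and P̃_S(s|o) > 0 for all (o,s). Then the single-step expected free energy satisfies the identity ∑_{s : Q(s)>0} ∑_o Q(s)·P(o|s)·(log Q(s) − log(P̃_O(o)·P̃_S(s|o))) = −∑_o Q(o)·log P̃_O(o) + ∑_{o : Q(o)>0} Q(o)·KL(Q(·|o) ‖ P̃_S(·|o)) − ∑_{o : Q(o)>0} Q(o)·KL(Q(·|o) ‖ Q); in particular it is bounded below by the pragmatic-epistemic decomposition: ∑_{s : Q(s)>0} ∑_o Q(s)·P(o|s)·(log Q(s) − log(P̃_O(o)·P̃_S(s|o))) ≥ −∑_o Q(o)·log P̃_O(o) − ∑_{o : Q(o)>0} Q(o)·KL(Q(·|o) ‖ Q). -/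
lemma KL_nonneg {X : Type*} [Fintype X] (p q : X → ℝ)
    (hp : IsBelief p) (hq : IsBelief q) (hqpos : ∀ x, 0 < q x) : 0 ≤ KL p q := by
  have key : ∀ x, (if 0 < p x then p x - q x else 0)
      ≤ (if 0 < p x then p x * Real.log (p x / q x) else 0) := by
    intro x
    by_cases hx : 0 < p x
    · rw [if_pos hx, if_pos hx]
      have hqx := hqpos x
      have h := Real.log_le_sub_one_of_pos (div_pos hqx hx)
      have h2 : p x * (Real.log (q x) - Real.log (p x)) ≤ q x - p x := by
        calc p x * (Real.log (q x) - Real.log (p x))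
            = p x * Real.log (q x / p x) := by rw [Real.log_div hqx.ne' hx.ne']
          _ ≤ p x * (q x / p x - 1) := mul_le_mul_of_nonneg_left h hx.le
          _ = q x - p x := by field_simp
      rw [Real.log_div hx.ne' hqx.ne']
      nlinarith
    · simp [hx]
  have h1 : 0 ≤ ∑ x, (if 0 < p x then p x - q x else 0) := by
    have e1 : (∑ x, (if 0 < p x then p x - q x else 0))
        = (∑ x, (if 0 < p x then p x else 0)) - (∑ x, (if 0 < p x then q x else 0)) := by
      rw [← Finset.sum_sub_distrib]
      refine Finset.sum_congr rfl fun x _ => ?_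
      by_cases hx : 0 < p x <;> simp [hx]
    have e2 : (∑ x, (if 0 < p x then p x else 0)) = 1 := by
      rw [← hp.2]
      refine Finset.sum_congr rfl fun x _ => ?_
      by_cases hx : 0 < p x
      · simp [hx]
      · have : p x = 0 := le_antisymm (not_lt.mp hx) (hp.1 x)
        simp [this]
    have e3 : (∑ x, (if 0 < p x then q x else 0)) ≤ 1 := by
      rw [← hq.2]
      refine Finset.sum_le_sum fun x _ => ?_
      by_cases hx : 0 < p x <;> simp [hx, (hqpos x).le]
    rw [e1, e2]
    linarith
  calc (0:ℝ) ≤ ∑ x, (if 0 < p x then p x - q x else 0) := h1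
    _ ≤ KL p q := Finset.sum_le_sum fun x _ => key x

/-- Single-step expected free energy identity and its pragmatic-epistemic
lower bound (appendix of the paper). -/
theorem efe_pragmatic_epistemic_decomposition
    {S O : Type*} [Fintype S] [Fintype O]
    (Q : S → ℝ) (hQ : IsBelief Q)
    (P : S → O → ℝ) (hP : ∀ s, IsBelief (P s))
    (PO : O → ℝ) (hPO : IsBelief PO) (hPOpos : ∀ o, 0 < PO o)
    (PS : O → S → ℝ) (hPS : ∀ o, IsBelief (PS o)) (hPSpos : ∀ o s, 0 < PS o s) :
    ((∑ s, if 0 < Q s then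
        ∑ o, Q s * P s o * (Real.log (Q s) - Real.log (PO o * PS o s)) else 0)
      = -(∑ o, (∑ s, P s o * Q s) * Real.log (PO o))
        + (∑ o, if 0 < (∑ s, P s o * Q s) then
            (∑ s, P s o * Q s) *
              KL (fun s => P s o * Q s / (∑ s', P s' o * Q s')) (PS o) else 0)
        - (∑ o, if 0 < (∑ s, P s o * Q s) then
            (∑ s, P s o * Q s) *
              KL (fun s => P s o * Q s / (∑ s', P s' o * Q s')) Q else 0))
    ∧ ((∑ s, if 0 < Q s then
        ∑ o, Q s * P s o * (Real.log (Q s) - Real.log (PO o * PS o s)) else 0)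
      ≥ -(∑ o, (∑ s, P s o * Q s) * Real.log (PO o))
        - (∑ o, if 0 < (∑ s, P s o * Q s) then
            (∑ s, P s o * Q s) *
              KL (fun s => P s o * Q s / (∑ s', P s' o * Q s')) Q else 0)) := by
  obtain ⟨hQ0, hQ1⟩ := hQ
  have hAnn : ∀ s o, 0 ≤ P s o * Q s := fun s o => mul_nonneg ((hP s).1 o) (hQ0 s)
  have hQonn : ∀ o, 0 ≤ ∑ s, P s o * Q s := fun o => Finset.sum_nonneg fun s _ => hAnn s o
  have hzero : ∀ o, ¬ 0 < (∑ s, P s o * Q s) → ∀ s, P s o * Q s = 0 := by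
    intro o h s
    have h0 : (∑ s, P s o * Q s) = 0 := le_antisymm (not_lt.mp h) (hQonn o)
    exact (Finset.sum_eq_zero_iff_of_nonneg (fun s _ => hAnn s o)).mp h0 s (Finset.mem_univ s)
  have hQpos : ∀ s o, 0 < P s o * Q s → 0 < Q s := by
    intro s o ha
    by_contra h
    have : Q s = 0 := le_antisymm (not_lt.mp h) (hQ0 s)
    simp [this] at ha
  -- LHS as a guarded double sum
  have hL : (∑ s, if 0 < Q s then
        ∑ o, Q s * P s o * (Real.log (Q s) - Real.log (PO o * PS o s)) else 0)
      = ∑ s, ∑ o, (if 0 < P s o * Q s then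
          P s o * Q s * (Real.log (Q s) - Real.log (PO o) - Real.log (PS o s)) else 0) := by
    refine Finset.sum_congr rfl fun s _ => ?_
    by_cases hs : 0 < Q s
    · rw [if_pos hs]
      refine Finset.sum_congr rfl fun o _ => ?_
      by_cases hp : 0 < P s o
      · rw [if_pos (mul_pos hp hs), Real.log_mul (hPOpos o).ne' (hPSpos o s).ne']
        ring
      · have hp0 : P s o = 0 := le_antisymm (not_lt.mp hp) ((hP s).1 o)
        simp [hp0]
    · have hs0 : Q s = 0 := le_antisymm (not_lt.mp hs) (hQ0 s)
      rw [if_neg hs]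
      exact (Finset.sum_eq_zero fun o _ => by simp [hs0]).symm
  -- first RHS term, per o
  have hT1 : ∀ o, (∑ s, (if 0 < P s o * Q s then -(P s o * Q s * Real.log (PO o)) else 0))
      = -((∑ s, P s o * Q s) * Real.log (PO o)) := by
    intro o
    rw [Finset.sum_mul, ← Finset.sum_neg_distrib]
    refine Finset.sum_congr rfl fun s _ => ?_
    by_cases h : 0 < P s o * Q s
    · rw [if_pos h]
    · have h0 : P s o * Q s = 0 := le_antisymm (not_lt.mp h) (hAnn s o)
      simp [h0]
  -- KL terms, per o, against an arbitrary positive reference r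
  have hTKL : ∀ (o : O) (r : S → ℝ), (∀ s, 0 < P s o * Q s → 0 < r s) →
      (if 0 < (∑ s, P s o * Q s) then (∑ s, P s o * Q s) *
          KL (fun s => P s o * Q s / (∑ s', P s' o * Q s')) r else 0)
      = ∑ s, (if 0 < P s o * Q s then P s o * Q s *
          (Real.log (P s o * Q s) - Real.log (∑ s', P s' o * Q s') - Real.log (r s)) else 0) := by
    intro o r hr
    by_cases ho : 0 < (∑ s, P s o * Q s)
    · rw [if_pos ho]
      unfold KL
      rw [Finset.mul_sum]
      refine Finset.sum_congr rfl fun s _ => ?_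
      by_cases ha : 0 < P s o * Q s
      · rw [if_pos (div_pos ha ho), if_pos ha,
          Real.log_div (div_pos ha ho).ne' (hr s ha).ne', Real.log_div ha.ne' ho.ne']
        field_simp
        try ring
      · have h0 : P s o * Q s = 0 := le_antisymm (not_lt.mp ha) (hAnn s o)
        simp [h0]
    · rw [if_neg ho]
      exact (Finset.sum_eq_zero fun s _ => by simp [hzero o ho s]).symm
  have hT2 := fun o => hTKL o (PS o) (fun s _ => hPSpos o s)
  have hT3 := fun o => hTKL o Q (fun s ha => hQpos s o ha)
  -- the equality
  have hEq : (∑ s, if 0 < Q s then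
        ∑ o, Q s * P s o * (Real.log (Q s) - Real.log (PO o * PS o s)) else 0)
      = -(∑ o, (∑ s, P s o * Q s) * Real.log (PO o))
        + (∑ o, if 0 < (∑ s, P s o * Q s) then
            (∑ s, P s o * Q s) *
              KL (fun s => P s o * Q s / (∑ s', P s' o * Q s')) (PS o) else 0)
        - (∑ o, if 0 < (∑ s, P s o * Q s) then
            (∑ s, P s o * Q s) *
              KL (fun s => P s o * Q s / (∑ s', P s' o * Q s')) Q else 0) := by
    have hR1 : -(∑ o, (∑ s, P s o * Q s) * Real.log (PO o))
        = ∑ o, ∑ s, (if 0 < P s o * Q s then -(P s o * Q s * Real.log (PO o)) else 0) := by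
      rw [← Finset.sum_neg_distrib]
      exact Finset.sum_congr rfl fun o _ => (hT1 o).symm
    rw [hL, hR1, Finset.sum_congr rfl fun o _ => hT2 o, Finset.sum_congr rfl fun o _ => hT3 o]
    rw [show (∑ s, ∑ o, (if 0 < P s o * Q s then
          P s o * Q s * (Real.log (Q s) - Real.log (PO o) - Real.log (PS o s)) else 0))
        = ∑ o, ∑ s, (if 0 < P s o * Q s then
          P s o * Q s * (Real.log (Q s) - Real.log (PO o) - Real.log (PS o s)) else 0)
      from Finset.sum_comm]
    rw [← Finset.sum_add_distrib, ← Finset.sum_sub_distrib]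
    refine Finset.sum_congr rfl fun o _ => ?_
    rw [← Finset.sum_add_distrib, ← Finset.sum_sub_distrib]
    refine Finset.sum_congr rfl fun s _ => ?_
    by_cases ha : 0 < P s o * Q s
    · rw [if_pos ha, if_pos ha, if_pos ha, if_pos ha]
      ring
    · simp [ha]
  refine ⟨hEq, ?_⟩
  rw [hEq]
  have hmid : 0 ≤ (∑ o, if 0 < (∑ s, P s o * Q s) then
      (∑ s, P s o * Q s) *
        KL (fun s => P s o * Q s / (∑ s', P s' o * Q s')) (PS o) else 0) := by
    refine Finset.sum_nonneg fun o _ => ?_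
    by_cases ho : 0 < (∑ s, P s o * Q s)
    · rw [if_pos ho]
      refine mul_nonneg ho.le (KL_nonneg _ _ ⟨fun s => div_nonneg (hAnn s o) ho.le, ?_⟩
        (hPS o) (hPSpos o))
      rw [← Finset.sum_div, div_self ho.ne']
    · rw [if_neg ho]
  linarith
end

section
/- Let the following hold: (i) V^π is the value function of (π, R, P); V^{op} is the value function of (π^{open}, R, P^{open}) with advantage A^{op}; V^{EFE} is the value function of (π^{EFE}, R + IG, P^{open}) with advantage A^{EFE}; V^{π^{open}}_M and V^{π^{EFE}}_M are the value functions of (π^{open}, R, P) and (π^{EFE}, R, P) respectively; (ii) d^π, d^{op}, d^{EFE} are the normalized discounted occupancies of π, π^{open}, π^{EFE} in kernel P, each nonnegative; (iii) ε_{π̃} = ∑ d^π(x,a)·|A^{op}(x,a)| and ∑ d^π(x,a)·|A^{EFE}(x,a)| ≤ ε_{π̃}; (iv) d^{op}(x,a) ≤ C·d^π(x,a) and d^{EFE}(x,a) ≤ C·d^π(x,a) for all (x,a); (v) IG(x,a) ≥ 2 for all (x,a), and γ·R_max ≥ 2·(1−γ) where R_max = max |R|; (vi) for every (x,a) and for W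 ∈ {V^{op}, V^{EFE}}: 0 ≤ ∑_{x'} (P(x'|x,a) − P^{open}(x'|x,a))·W(x') ≤ (R_max/(1−γ))·√(2·IG(x,a)). Let ε_{IG} = ∑_{(x,a)} d^π(x,a)·IG(x,a). Then J_{P,R}(π) − J_{P,R}(π^{open}) ≤ ε_{π̃}/(1−γ) + ((C+1)·γ·R_max/(1−γ)²)·ε_{IG}, and J_{P,R}(π) − J_{P,R}(π^{EFE}) ≤ ε_{π̃}/(1−γ) + ((C+1)·γ·R_max/(1−γ)²)·ε_{IG} − ((C+1)/(1−γ))·ε_{IG}. -/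
section helpers
variable {X A : Type*} [Fintype X] [Fintype A]

lemma occ_marginal (γ : ℝ) (μ : X → ℝ) (P : X → A → X → ℝ)
    (ρ : X → A → ℝ) (hρ : ∀ x, ∑ a, ρ x a = 1)
    (d : X → A → ℝ)
    (hd : ∀ x a, d x a = (1 - γ) * μ x * ρ x a
        + γ * ρ x a * ∑ p : X × A, P p.1 p.2 x * d p.1 p.2) (x : X) :
    ∑ a, d x a = (1 - γ) * μ x + γ * ∑ p : X × A, P p.1 p.2 x * d p.1 p.2 := by
  calc ∑ a, d x a
      = ∑ a, ((1 - γ) * μ x + γ * ∑ p : X × A, P p.1 p.2 x * d p.1 p.2) * ρ x a := by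
        refine Finset.sum_congr rfl fun a _ => ?_; rw [hd]; ring
    _ = ((1 - γ) * μ x + γ * ∑ p : X × A, P p.1 p.2 x * d p.1 p.2) * ∑ a, ρ x a :=
        (Finset.mul_sum _ _ _).symm
    _ = _ := by rw [hρ x]; ring

lemma occ_tele (γ : ℝ) (μ : X → ℝ) (P : X → A → X → ℝ)
    (ρ : X → A → ℝ) (hρ : ∀ x, ∑ a, ρ x a = 1)
    (d : X → A → ℝ)
    (hd : ∀ x a, d x a = (1 - γ) * μ x * ρ x a
        + γ * ρ x a * ∑ p : X × A, P p.1 p.2 x * d p.1 p.2)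
    (W : X → ℝ) :
    ∑ p : X × A, d p.1 p.2 * (W p.1 - γ * ∑ x', P p.1 p.2 x' * W x')
      = (1 - γ) * ∑ x, μ x * W x := by
  have h1 : ∑ p : X × A, d p.1 p.2 * W p.1
      = (1 - γ) * (∑ x, μ x * W x)
        + γ * ∑ p : X × A, d p.1 p.2 * ∑ x', P p.1 p.2 x' * W x' := by
    calc ∑ p : X × A, d p.1 p.2 * W p.1
        = ∑ x, ∑ a, d x a * W x := by rw [Fintype.sum_prod_type]
      _ = ∑ x, (∑ a, d x a) * W x := by
          refine Finset.sum_congr rfl fun x _ => (Finset.sum_mul _ _ _).symm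
      _ = ∑ x, ((1 - γ) * μ x * W x
            + γ * ∑ p : X × A, d p.1 p.2 * (P p.1 p.2 x * W x)) := by
          refine Finset.sum_congr rfl fun x _ => ?_
          rw [occ_marginal γ μ P ρ hρ d hd x, add_mul, mul_assoc γ, Finset.sum_mul]
          congr 1
          refine congrArg (γ * ·) (Finset.sum_congr rfl fun p _ => by ring)
      _ = (1 - γ) * (∑ x, μ x * W x)
            + γ * ∑ p : X × A, d p.1 p.2 * ∑ x', P p.1 p.2 x' * W x' := by
          rw [Finset.sum_add_distrib]
          congr 1
          · rw [Finset.mul_sum]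
            exact Finset.sum_congr rfl fun x _ => by ring
          · rw [← Finset.mul_sum, Finset.sum_comm]
            refine congrArg (γ * ·) (Finset.sum_congr rfl fun p _ => ?_)
            exact (Finset.mul_sum _ _ _).symm
  have h2 : ∑ p : X × A, d p.1 p.2 * (W p.1 - γ * ∑ x', P p.1 p.2 x' * W x')
      = (∑ p : X × A, d p.1 p.2 * W p.1)
        - γ * ∑ p : X × A, d p.1 p.2 * ∑ x', P p.1 p.2 x' * W x' := by
    rw [Finset.mul_sum, ← Finset.sum_sub_distrib]
    exact Finset.sum_congr rfl fun p _ => by ring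
  rw [h2, h1]; ring

lemma occ_avg (γ : ℝ) (μ : X → ℝ) (P : X → A → X → ℝ)
    (ρ : X → A → ℝ) (hρ : ∀ x, ∑ a, ρ x a = 1)
    (d : X → A → ℝ)
    (hd : ∀ x a, d x a = (1 - γ) * μ x * ρ x a
        + γ * ρ x a * ∑ p : X × A, P p.1 p.2 x * d p.1 p.2)
    (Q : X → A → ℝ) (W : X → ℝ) (hW : ∀ x, W x = ∑ a, ρ x a * Q x a) :
    ∑ p : X × A, d p.1 p.2 * (Q p.1 p.2 - W p.1) = 0 := by
  have key : ∀ x : X, ∑ a, d x a * (Q x a - W x) = 0 := by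
    intro x
    set g : ℝ := (1 - γ) * μ x + γ * ∑ p : X × A, P p.1 p.2 x * d p.1 p.2 with hg
    have hdx : ∀ a, d x a = ρ x a * g := fun a => by rw [hd, hg]; ring
    calc ∑ a, d x a * (Q x a - W x)
        = ∑ a, (g * (ρ x a * Q x a) - (g * W x) * ρ x a) := by
          refine Finset.sum_congr rfl fun a _ => ?_; rw [hdx]; ring
      _ = g * (∑ a, ρ x a * Q x a) - (g * W x) * ∑ a, ρ x a := by
          rw [Finset.sum_sub_distrib, ← Finset.mul_sum, ← Finset.mul_sum, mul_comm (g * W x)]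
      _ = 0 := by rw [← hW, hρ x]; ring
  calc ∑ p : X × A, d p.1 p.2 * (Q p.1 p.2 - W p.1)
      = ∑ x, ∑ a, d x a * (Q x a - W x) := by rw [Fintype.sum_prod_type]
    _ = 0 := by simp [key]

end helpers
/-- Theorem 1 of the paper (abstract belief-state form): regret bounds for the
open-loop and EFE policies against the Bayes optimal policy. -/
theorem open_loop_and_efe_performance_gaps
    {X A : Type*} [Fintype X] [Fintype A] [Nonempty X] [Nonempty A]
    (γ : ℝ) (hγ0 : 0 < γ) (hγ1 : γ < 1)
    (μ : X → ℝ) (hμ : IsBelief μ)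
    (P Popen : X → A → X → ℝ)
    (hP : ∀ x a, IsBelief (P x a)) (hPopen : ∀ x a, IsBelief (Popen x a))
    (R : X → A → ℝ) (IG : X → A → ℝ)
    (π πop πefe : X → A → ℝ)
    (hπ : ∀ x, IsBelief (π x)) (hπop : ∀ x, IsBelief (πop x))
    (hπefe : ∀ x, IsBelief (πefe x))
    -- (i) value functions
    (Vπ Vop Vefe VopM VefeM : X → ℝ)
    (hVπ : ∀ x, Vπ x = ∑ a, π x a * (R x a + γ * ∑ x', P x a x' * Vπ x'))
    (hVop : ∀ x, Vop x = ∑ a, πop x a * (R x a + γ * ∑ x', Popen x a x' * Vop x'))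
    (hVefe : ∀ x, Vefe x =
      ∑ a, πefe x a * ((R x a + IG x a) + γ * ∑ x', Popen x a x' * Vefe x'))
    (hVopM : ∀ x, VopM x = ∑ a, πop x a * (R x a + γ * ∑ x', P x a x' * VopM x'))
    (hVefeM : ∀ x, VefeM x = ∑ a, πefe x a * (R x a + γ * ∑ x', P x a x' * VefeM x'))
    -- (ii) normalized discounted occupancies in kernel P, nonnegative
    (dπ dop defe : X → A → ℝ)
    (hdπ : ∀ x a, dπ x a = (1 - γ) * μ x * π x a
        + γ * π x a * ∑ p : X × A, P p.1 p.2 x * dπ p.1 p.2)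
    (hdop : ∀ x a, dop x a = (1 - γ) * μ x * πop x a
        + γ * πop x a * ∑ p : X × A, P p.1 p.2 x * dop p.1 p.2)
    (hdefe : ∀ x a, defe x a = (1 - γ) * μ x * πefe x a
        + γ * πefe x a * ∑ p : X × A, P p.1 p.2 x * defe p.1 p.2)
    (hdπ_nonneg : ∀ x a, 0 ≤ dπ x a) (hdop_nonneg : ∀ x a, 0 ≤ dop x a)
    (hdefe_nonneg : ∀ x a, 0 ≤ defe x a)
    -- (iii) policy advantage errors
    (εtilde : ℝ)
    (hεtilde : εtilde = ∑ p : X × A, dπ p.1 p.2 *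
        |(R p.1 p.2 + γ * ∑ x', Popen p.1 p.2 x' * Vop x') - Vop p.1|)
    (hεefe : (∑ p : X × A, dπ p.1 p.2 *
        |((R p.1 p.2 + IG p.1 p.2) + γ * ∑ x', Popen p.1 p.2 x' * Vefe x') - Vefe p.1|)
        ≤ εtilde)
    -- (iv) bounded density ratios
    (C : ℝ) (hCop : ∀ x a, dop x a ≤ C * dπ x a)
    (hCefe : ∀ x a, defe x a ≤ C * dπ x a)
    -- (v) information gain and reward magnitude assumptions
    (hIG2 : ∀ x a, 2 ≤ IG x a)
    (Rmax : ℝ)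
    (hRmax : Rmax = Finset.univ.sup' Finset.univ_nonempty
        (fun p : X × A => |R p.1 p.2|))
    (hγRmax : 2 * (1 - γ) ≤ γ * Rmax)
    -- (vi) closed-loop model advantage bounds for both value functions
    (hadvop : ∀ x a,
      0 ≤ ∑ x', (P x a x' - Popen x a x') * Vop x' ∧
      (∑ x', (P x a x' - Popen x a x') * Vop x')
        ≤ (Rmax / (1 - γ)) * Real.sqrt (2 * IG x a))
    (hadvefe : ∀ x a,
      0 ≤ ∑ x', (P x a x' - Popen x a x') * Vefe x' ∧
      (∑ x', (P x a x' - Popen x a x') * Vefe x')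
        ≤ (Rmax / (1 - γ)) * Real.sqrt (2 * IG x a))
    -- expected information gain under the Bayes optimal occupancy
    (εIG : ℝ) (hεIG : εIG = ∑ p : X × A, dπ p.1 p.2 * IG p.1 p.2) :
    ((∑ x, μ x * Vπ x) - (∑ x, μ x * VopM x)
      ≤ εtilde / (1 - γ) + ((C + 1) * γ * Rmax / (1 - γ) ^ 2) * εIG)
    ∧ ((∑ x, μ x * Vπ x) - (∑ x, μ x * VefeM x)
      ≤ εtilde / (1 - γ) + ((C + 1) * γ * Rmax / (1 - γ) ^ 2) * εIG
        - ((C + 1) / (1 - γ)) * εIG) := by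
  -- basic facts
  obtain ⟨hμ0, hμ1⟩ := hμ
  have h1γ : 0 < 1 - γ := by linarith
  have hπ1 : ∀ x, ∑ a, π x a = 1 := fun x => (hπ x).2
  have hπop1 : ∀ x, ∑ a, πop x a = 1 := fun x => (hπop x).2
  have hπefe1 : ∀ x, ∑ a, πefe x a = 1 := fun x => (hπefe x).2
  have hRmax0 : 0 ≤ Rmax := by
    have hp : (Classical.arbitrary (X × A)) ∈ (Finset.univ : Finset (X × A)) :=
      Finset.mem_univ _
    have := Finset.le_sup' (fun p : X × A => |R p.1 p.2|) hp
    rw [hRmax]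
    exact le_trans (abs_nonneg _) this
  -- expansion of the model-advantage sums
  have hΔop : ∀ p : X × A, (∑ x', (P p.1 p.2 x' - Popen p.1 p.2 x') * Vop x')
      = (∑ x', P p.1 p.2 x' * Vop x') - ∑ x', Popen p.1 p.2 x' * Vop x' := by
    intro p
    rw [← Finset.sum_sub_distrib]
    exact Finset.sum_congr rfl fun x' _ => by ring
  have hΔefe : ∀ p : X × A, (∑ x', (P p.1 p.2 x' - Popen p.1 p.2 x') * Vefe x')
      = (∑ x', P p.1 p.2 x' * Vefe x') - ∑ x', Popen p.1 p.2 x' * Vefe x' := by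
    intro p
    rw [← Finset.sum_sub_distrib]
    exact Finset.sum_congr rfl fun x' _ => by ring
  -- (1-γ) J equals expected reward under occupancy, for each of the three policies
  have hJπ : (1 - γ) * ∑ x, μ x * Vπ x = ∑ p : X × A, dπ p.1 p.2 * R p.1 p.2 := by
    have t := occ_tele γ μ P π hπ1 dπ hdπ Vπ
    have z := occ_avg γ μ P π hπ1 dπ hdπ
      (fun x a => R x a + γ * ∑ x', P x a x' * Vπ x') Vπ hVπ
    rw [← t, ← add_zero (∑ p : X × A, dπ p.1 p.2 * _), ← z,
      ← Finset.sum_add_distrib]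
    exact Finset.sum_congr rfl fun p _ => by ring
  have hJop : (1 - γ) * ∑ x, μ x * VopM x = ∑ p : X × A, dop p.1 p.2 * R p.1 p.2 := by
    have t := occ_tele γ μ P πop hπop1 dop hdop VopM
    have z := occ_avg γ μ P πop hπop1 dop hdop
      (fun x a => R x a + γ * ∑ x', P x a x' * VopM x') VopM hVopM
    rw [← t, ← add_zero (∑ p : X × A, dop p.1 p.2 * _), ← z,
      ← Finset.sum_add_distrib]
    exact Finset.sum_congr rfl fun p _ => by ring
  have hJefe : (1 - γ) * ∑ x, μ x * VefeM x
      = ∑ p : X × A, defe p.1 p.2 * R p.1 p.2 := by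
    have t := occ_tele γ μ P πefe hπefe1 defe hdefe VefeM
    have z := occ_avg γ μ P πefe hπefe1 defe hdefe
      (fun x a => R x a + γ * ∑ x', P x a x' * VefeM x') VefeM hVefeM
    rw [← t, ← add_zero (∑ p : X × A, defe p.1 p.2 * _), ← z,
      ← Finset.sum_add_distrib]
    exact Finset.sum_congr rfl fun p _ => by ring
  -- telescoping of the open-loop / EFE auxiliary value functions
  have tπop := occ_tele γ μ P π hπ1 dπ hdπ Vop
  have top := occ_tele γ μ P πop hπop1 dop hdop Vop
  have tπefe := occ_tele γ μ P π hπ1 dπ hdπ Vefe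
  have tefe := occ_tele γ μ P πefe hπefe1 defe hdefe Vefe
  -- policy averages vanish against own occupancies
  have zop := occ_avg γ μ P πop hπop1 dop hdop
    (fun x a => R x a + γ * ∑ x', Popen x a x' * Vop x') Vop hVop
  have zefe := occ_avg γ μ P πefe hπefe1 defe hdefe
    (fun x a => (R x a + IG x a) + γ * ∑ x', Popen x a x' * Vefe x') Vefe hVefe
  -- shorthand sums
  set Sπadvop : ℝ := ∑ p : X × A, dπ p.1 p.2 *
      ((R p.1 p.2 + γ * ∑ x', Popen p.1 p.2 x' * Vop x') - Vop p.1) with hSπadvop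
  set Sπadvefe : ℝ := ∑ p : X × A, dπ p.1 p.2 *
      (((R p.1 p.2 + IG p.1 p.2) + γ * ∑ x', Popen p.1 p.2 x' * Vefe x') - Vefe p.1)
    with hSπadvefe
  set SπΔop : ℝ := ∑ p : X × A,
      dπ p.1 p.2 * ∑ x', (P p.1 p.2 x' - Popen p.1 p.2 x') * Vop x' with hSπΔop
  set SopΔ : ℝ := ∑ p : X × A,
      dop p.1 p.2 * ∑ x', (P p.1 p.2 x' - Popen p.1 p.2 x') * Vop x' with hSopΔ
  set SπΔefe : ℝ := ∑ p : X × A,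
      dπ p.1 p.2 * ∑ x', (P p.1 p.2 x' - Popen p.1 p.2 x') * Vefe x' with hSπΔefe
  set SefeΔ : ℝ := ∑ p : X × A,
      defe p.1 p.2 * ∑ x', (P p.1 p.2 x' - Popen p.1 p.2 x') * Vefe x' with hSefeΔ
  set SefeIG : ℝ := ∑ p : X × A, defe p.1 p.2 * IG p.1 p.2 with hSefeIG
  -- key identity for the open-loop policy
  have keyop : (1 - γ) * ((∑ x, μ x * Vπ x) - ∑ x, μ x * VopM x)
      = Sπadvop + γ * SπΔop - γ * SopΔ := by
    have e1 : ∑ p : X × A, dπ p.1 p.2 * R p.1 p.2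
        = (∑ p : X × A, dπ p.1 p.2 * (Vop p.1 - γ * ∑ x', P p.1 p.2 x' * Vop x'))
          + Sπadvop + γ * SπΔop := by
      rw [hSπadvop, hSπΔop, Finset.mul_sum, ← Finset.sum_add_distrib,
        ← Finset.sum_add_distrib]
      refine Finset.sum_congr rfl fun p _ => ?_
      rw [hΔop p]; ring
    have e2 : ∑ p : X × A, dop p.1 p.2 * R p.1 p.2
        = (∑ p : X × A, dop p.1 p.2 * (Vop p.1 - γ * ∑ x', P p.1 p.2 x' * Vop x'))
          + (∑ p : X × A, dop p.1 p.2 *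
              ((R p.1 p.2 + γ * ∑ x', Popen p.1 p.2 x' * Vop x') - Vop p.1))
          + γ * SopΔ := by
      rw [hSopΔ, Finset.mul_sum, ← Finset.sum_add_distrib, ← Finset.sum_add_distrib]
      refine Finset.sum_congr rfl fun p _ => ?_
      rw [hΔop p]; ring
    rw [mul_sub, hJπ, hJop, e1, e2, zop, tπop, top]; ring
  -- key identity for the EFE policy
  have keyefe : (1 - γ) * ((∑ x, μ x * Vπ x) - ∑ x, μ x * VefeM x)
      = Sπadvefe - εIG + γ * SπΔefe + SefeIG - γ * SefeΔ := by
    have e1 : ∑ p : X × A, dπ p.1 p.2 * R p.1 p.2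
        = (∑ p : X × A, dπ p.1 p.2 * (Vefe p.1 - γ * ∑ x', P p.1 p.2 x' * Vefe x'))
          + Sπadvefe - (∑ p : X × A, dπ p.1 p.2 * IG p.1 p.2) + γ * SπΔefe := by
      rw [hSπadvefe, hSπΔefe, Finset.mul_sum, ← Finset.sum_add_distrib,
        ← Finset.sum_sub_distrib, ← Finset.sum_add_distrib]
      refine Finset.sum_congr rfl fun p _ => ?_
      rw [hΔefe p]; ring
    have e2 : ∑ p : X × A, defe p.1 p.2 * R p.1 p.2
        = (∑ p : X × A, defe p.1 p.2 * (Vefe p.1 - γ * ∑ x', P p.1 p.2 x' * Vefe x'))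
          + (∑ p : X × A, defe p.1 p.2 *
              (((R p.1 p.2 + IG p.1 p.2) + γ * ∑ x', Popen p.1 p.2 x' * Vefe x')
                - Vefe p.1))
          - SefeIG + γ * SefeΔ := by
      rw [hSefeΔ, hSefeIG, Finset.mul_sum, ← Finset.sum_add_distrib,
        ← Finset.sum_sub_distrib, ← Finset.sum_add_distrib]
      refine Finset.sum_congr rfl fun p _ => ?_
      rw [hΔefe p]; ring
    rw [mul_sub, hJπ, hJefe, e1, e2, zefe, tπefe, tefe, hεIG]; ring
  -- inequality bounds on the individual sums
  have hsqrt : ∀ x a, Real.sqrt (2 * IG x a) ≤ IG x a := by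
    intro x a
    have h2 := hIG2 x a
    have : Real.sqrt (2 * IG x a) ≤ Real.sqrt ((IG x a) ^ 2) :=
      Real.sqrt_le_sqrt (by nlinarith)
    rwa [Real.sqrt_sq (by linarith)] at this
  have hcnn : 0 ≤ Rmax / (1 - γ) := div_nonneg hRmax0 h1γ.le
  have hΔle : ∀ (W : X → ℝ), (∀ x a,
        0 ≤ ∑ x', (P x a x' - Popen x a x') * W x' ∧
        (∑ x', (P x a x' - Popen x a x') * W x')
          ≤ (Rmax / (1 - γ)) * Real.sqrt (2 * IG x a)) →
      (∑ p : X × A, dπ p.1 p.2 * ∑ x', (P p.1 p.2 x' - Popen p.1 p.2 x') * W x')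
        ≤ (Rmax / (1 - γ)) * εIG := by
    intro W hadv
    have step : ∀ p : X × A,
        dπ p.1 p.2 * ∑ x', (P p.1 p.2 x' - Popen p.1 p.2 x') * W x'
          ≤ (Rmax / (1 - γ)) * (dπ p.1 p.2 * IG p.1 p.2) := by
      intro p
      have h1 := (hadv p.1 p.2).2
      have h2 : (∑ x', (P p.1 p.2 x' - Popen p.1 p.2 x') * W x')
          ≤ (Rmax / (1 - γ)) * IG p.1 p.2 :=
        h1.trans (mul_le_mul_of_nonneg_left (hsqrt p.1 p.2) hcnn)
      calc dπ p.1 p.2 * ∑ x', (P p.1 p.2 x' - Popen p.1 p.2 x') * W x'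
          ≤ dπ p.1 p.2 * ((Rmax / (1 - γ)) * IG p.1 p.2) :=
            mul_le_mul_of_nonneg_left h2 (hdπ_nonneg p.1 p.2)
        _ = (Rmax / (1 - γ)) * (dπ p.1 p.2 * IG p.1 p.2) := by ring
    calc (∑ p : X × A, dπ p.1 p.2 * ∑ x', (P p.1 p.2 x' - Popen p.1 p.2 x') * W x')
        ≤ ∑ p : X × A, (Rmax / (1 - γ)) * (dπ p.1 p.2 * IG p.1 p.2) :=
          Finset.sum_le_sum fun p _ => step p
      _ = (Rmax / (1 - γ)) * εIG := by rw [← Finset.mul_sum, hεIG]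
  have hSπΔop_le : SπΔop ≤ (Rmax / (1 - γ)) * εIG := hΔle Vop hadvop
  have hSπΔefe_le : SπΔefe ≤ (Rmax / (1 - γ)) * εIG := hΔle Vefe hadvefe
  have hSopΔ_nn : 0 ≤ SopΔ :=
    Finset.sum_nonneg fun p _ => mul_nonneg (hdop_nonneg p.1 p.2) (hadvop p.1 p.2).1
  have hSefeΔ_nn : 0 ≤ SefeΔ :=
    Finset.sum_nonneg fun p _ => mul_nonneg (hdefe_nonneg p.1 p.2) (hadvefe p.1 p.2).1
  have hSπadvop_le : Sπadvop ≤ εtilde := by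
    rw [hεtilde, hSπadvop]
    exact Finset.sum_le_sum fun p _ =>
      mul_le_mul_of_nonneg_left (le_abs_self _) (hdπ_nonneg p.1 p.2)
  have hSπadvefe_le : Sπadvefe ≤ εtilde := by
    refine le_trans ?_ hεefe
    rw [hSπadvefe]
    exact Finset.sum_le_sum fun p _ =>
      mul_le_mul_of_nonneg_left (le_abs_self _) (hdπ_nonneg p.1 p.2)
  have hεIG_nn : 0 ≤ εIG := by
    rw [hεIG]
    exact Finset.sum_nonneg fun p _ =>
      mul_nonneg (hdπ_nonneg p.1 p.2) (by linarith [hIG2 p.1 p.2])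
  have hSefeIG_nn : 0 ≤ SefeIG :=
    Finset.sum_nonneg fun p _ =>
      mul_nonneg (hdefe_nonneg p.1 p.2) (by linarith [hIG2 p.1 p.2])
  have hSefeIG_le : SefeIG ≤ C * εIG := by
    rw [hSefeIG, hεIG, Finset.mul_sum]
    refine Finset.sum_le_sum fun p _ => ?_
    have := mul_le_mul_of_nonneg_right (hCefe p.1 p.2)
      (by linarith [hIG2 p.1 p.2] : (0:ℝ) ≤ IG p.1 p.2)
    linarith [this]
  have hCεIG_nn : 0 ≤ C * εIG := le_trans hSefeIG_nn hSefeIG_le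
  have hratio : 2 ≤ γ * Rmax / (1 - γ) := by
    rw [le_div_iff₀ h1γ]; linarith
  -- conclude
  constructor
  · have hmul : (1 - γ) * ((∑ x, μ x * Vπ x) - ∑ x, μ x * VopM x)
        ≤ (1 - γ) * (εtilde / (1 - γ) + ((C + 1) * γ * Rmax / (1 - γ) ^ 2) * εIG) := by
      have hrhs : (1 - γ) * (εtilde / (1 - γ) + ((C + 1) * γ * Rmax / (1 - γ) ^ 2) * εIG)
          = εtilde + γ * ((Rmax / (1 - γ)) * εIG) + (γ * Rmax / (1 - γ)) * (C * εIG) := by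
        field_simp
        ring
      rw [keyop, hrhs]
      have h3 : 0 ≤ (γ * Rmax / (1 - γ)) * (C * εIG) :=
        mul_nonneg (div_nonneg (mul_nonneg hγ0.le hRmax0) h1γ.le) hCεIG_nn
      have h4 := mul_le_mul_of_nonneg_left hSπΔop_le hγ0.le
      have h5 := mul_nonneg hγ0.le hSopΔ_nn
      linarith [hSπadvop_le]
    exact le_of_mul_le_mul_left hmul h1γ
  · have hmul : (1 - γ) * ((∑ x, μ x * Vπ x) - ∑ x, μ x * VefeM x)
        ≤ (1 - γ) * (εtilde / (1 - γ) + ((C + 1) * γ * Rmax / (1 - γ) ^ 2) * εIG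
          - ((C + 1) / (1 - γ)) * εIG) := by
      have hrhs : (1 - γ) * (εtilde / (1 - γ) + ((C + 1) * γ * Rmax / (1 - γ) ^ 2) * εIG
            - ((C + 1) / (1 - γ)) * εIG)
          = εtilde + γ * ((Rmax / (1 - γ)) * εIG) + (γ * Rmax / (1 - γ)) * (C * εIG)
            - (C + 1) * εIG := by
        field_simp
        ring
      rw [keyefe, hrhs]
      have h3 := mul_le_mul_of_nonneg_right hratio hCεIG_nn
      have h4 := mul_le_mul_of_nonneg_left hSπΔefe_le hγ0.le
      have h5 := mul_nonneg hγ0.le hSefeΔ_nn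
      linarith [hSπadvefe_le, hSefeIG_le]
    exact le_of_mul_le_mul_left hmul h1γ
end
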